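/- arXiv:0907.1185 — 3 statements merged into one kernel-verified Lean document; each statement's English description precedes it below -/
import Mathlib

section
/- Let {ξ_j : j ≥ 1} be a strictly stationary sequence of real random variables, λ > 0, θ > 0, and (u_n) a sequence of reals such that n·P(ξ₁ > u_n) → λ and P(max_{1≤j≤⌊nt⌋} ξ_j ≤ u_n) → e^{-θλt} for all t > 0. Then for every t > 0, P(max_{2≤j≤⌊nt⌋} ξ_j > u_n | ξ₁ > u_n) → 1 − θ e^{-θλt} as n → ∞. -/
open MeasureTheory Filter Set


private lemma aux_floor_ratio (s : ℝ) (hs : 0 ≤ s) :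
    Tendsto (fun n : ℕ => (⌊(n : ℝ) * s⌋₊ : ℝ) / n) atTop (nhds s) := by
  have h1 : Tendsto (fun n : ℕ => s - 1 / (n : ℝ)) atTop (nhds s) := by
    simpa using tendsto_const_nhds.sub (tendsto_one_div_atTop_nhds_zero_nat (𝕜 := ℝ))
  refine tendsto_of_tendsto_of_tendsto_of_le_of_le' h1 tendsto_const_nhds ?_ ?_
  · filter_upwards [eventually_ge_atTop 1] with n hn
    have hn' : (0:ℝ) < n := by exact_mod_cast hn
    have h2 : (n : ℝ) * s - 1 ≤ (⌊(n : ℝ) * s⌋₊ : ℝ) := by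
      have := Nat.sub_one_lt_floor ((n : ℝ) * s)
      linarith
    rw [le_div_iff₀ hn']
    have h3 : (1 / (n:ℝ)) * n = 1 := by field_simp
    nlinarith
  · filter_upwards [eventually_ge_atTop 1] with n hn
    have hn' : (0:ℝ) < n := by exact_mod_cast hn
    have h2 : (⌊(n : ℝ) * s⌋₊ : ℝ) ≤ (n : ℝ) * s := Nat.floor_le (by positivity)
    rw [div_le_iff₀ hn']
    linarith [mul_comm s (n:ℝ)]

private lemma aux_telescope (f : ℕ → ℝ) (a b : ℕ) (hab : a ≤ b) :
    ∑ k ∈ Finset.Ico a b, (f k - f (k + 1)) = f a - f b := by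
  rw [Finset.sum_Ico_eq_sub _ hab, Finset.sum_range_sub' f, Finset.sum_range_sub' f]
  ring

private lemma aux_key (F : ℕ → ℕ → ℝ) (lam θ t : ℝ) (ht : 0 < t) (hlam : 0 < lam)
    (hθ : 0 < θ)
    (hanti : ∀ n k l, k ≤ l → F n l - F n (l + 1) ≤ F n k - F n (k + 1))
    (hnonneg : ∀ n k, 0 ≤ F n k - F n (k + 1))
    (hmax : ∀ s : ℝ, 0 < s → Tendsto (fun n : ℕ => F n ⌊(n : ℝ) * s⌋₊) atTop
      (nhds (Real.exp (-θ * lam * s)))) :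
    Tendsto (fun n : ℕ =>
        (n : ℝ) * (F n (⌊(n : ℝ) * t⌋₊ - 1) - F n (⌊(n : ℝ) * t⌋₊ - 1 + 1)))
      atTop (nhds (θ * lam * Real.exp (-θ * lam * t))) := by
  set φ : ℝ → ℝ := fun s => Real.exp (-θ * lam * s) with hφ
  set L : ℝ := θ * lam * φ t with hLdef
  have hFanti : ∀ n, Antitone (F n) := fun n =>
    antitone_nat_of_succ_le fun k => by linarith [hnonneg n k]
  have hderiv : HasDerivAt φ (φ t * (-θ * lam)) t := by
    have h1 : HasDerivAt (fun s : ℝ => -θ * lam * s) (-θ * lam) t := by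
      simpa using (hasDerivAt_id t).const_mul (-θ * lam)
    simpa [hφ] using h1.exp
  have hslope := hasDerivAt_iff_tendsto_slope.mp hderiv
  have hLval : -(φ t * (-θ * lam)) = L := by rw [hLdef]; ring
  have hLleft : Tendsto (fun s => (φ s - φ t) / (t - s)) (nhdsWithin t (Set.Iio t))
      (nhds L) := by
    have h1 : Tendsto (slope φ t) (nhdsWithin t (Set.Iio t))
        (nhds (φ t * (-θ * lam))) :=
      hslope.mono_left (nhdsWithin_mono t fun s hs => ne_of_lt hs)
    have h2 := h1.neg
    rw [hLval] at h2
    refine h2.congr fun s => ?_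
    rw [slope_def_field, ← neg_sub s t, div_neg]
  have hLright : Tendsto (fun s => (φ t - φ s) / (s - t)) (nhdsWithin t (Set.Ioi t))
      (nhds L) := by
    have h1 : Tendsto (slope φ t) (nhdsWithin t (Set.Ioi t))
        (nhds (φ t * (-θ * lam))) :=
      hslope.mono_left (nhdsWithin_mono t fun s hs => ne_of_gt hs)
    have h2 := h1.neg
    rw [hLval] at h2
    refine h2.congr fun s => ?_
    rw [slope_def_field, ← neg_div, neg_sub]
  rw [Metric.tendsto_atTop]
  intro ε hε
  -- choose t' < t
  obtain ⟨t', ht'mem, ht'close⟩ :=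
    ((eventually_mem_set.mpr (Ioo_mem_nhdsLT_of_mem ⟨ht, le_refl t⟩)).and
      (Metric.tendsto_nhds.mp hLleft (ε/2) (by positivity))).exists
  -- choose t'' > t
  obtain ⟨t'', ht''mem, ht''close⟩ :=
    ((eventually_mem_set.mpr (Ioo_mem_nhdsGT_of_mem ⟨le_refl t, lt_add_one t⟩)).and
      (Metric.tendsto_nhds.mp hLright (ε/2) (by positivity))).exists
  have ht'pos : 0 < t' := ht'mem.1
  have ht'lt : t' < t := ht'mem.2
  have ht''gt : t < t'' := ht''mem.1
  have ht''pos : 0 < t'' := lt_trans ht ht''gt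
  have hfr := fun (s : ℝ) (hs : 0 < s) => aux_floor_ratio s hs.le
  -- upper bound sequence U
  have hdiffU : Tendsto (fun n : ℕ => ((⌊(n:ℝ)*t⌋₊ : ℝ) - (⌊(n:ℝ)*t'⌋₊ : ℝ)) / n)
      atTop (nhds (t - t')) :=
    ((hfr t ht).sub (hfr t' ht'pos)).congr fun n => (sub_div _ _ _).symm
  have htt' : t - t' ≠ 0 := ne_of_gt (by linarith)
  have hinvU : Tendsto (fun n : ℕ => (n : ℝ) / ((⌊(n:ℝ)*t⌋₊ : ℝ) - ⌊(n:ℝ)*t'⌋₊))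
      atTop (nhds (t - t')⁻¹) :=
    (hdiffU.inv₀ htt').congr fun n => by rw [inv_div]
  have hU : Tendsto (fun n : ℕ => (F n ⌊(n:ℝ)*t'⌋₊ - F n ⌊(n:ℝ)*t⌋₊) *
      ((n:ℝ) / ((⌊(n:ℝ)*t⌋₊ : ℝ) - ⌊(n:ℝ)*t'⌋₊))) atTop
      (nhds ((φ t' - φ t) * (t - t')⁻¹)) :=
    ((hmax t' ht'pos).sub (hmax t ht)).mul hinvU
  have hdiffTop : Tendsto (fun n : ℕ => (⌊(n:ℝ)*t⌋₊ : ℝ) - ⌊(n:ℝ)*t'⌋₊) atTop atTop := by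
    have h1 : Tendsto (fun n : ℕ =>
        (((⌊(n:ℝ)*t⌋₊:ℝ) - ⌊(n:ℝ)*t'⌋₊)/n) * n) atTop atTop :=
      Filter.Tendsto.pos_mul_atTop (by linarith) hdiffU tendsto_natCast_atTop_atTop
    refine h1.congr' ?_
    filter_upwards [eventually_ge_atTop 1] with n hn
    have hn' : (n:ℝ) ≠ 0 := by
      have : (0:ℝ) < n := by exact_mod_cast hn
      exact ne_of_gt this
    field_simp
  have hEvLt : ∀ᶠ n : ℕ in atTop, ⌊(n:ℝ)*t'⌋₊ < ⌊(n:ℝ)*t⌋₊ := by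
    filter_upwards [hdiffTop.eventually_ge_atTop 1] with n hn
    have h2 : (⌊(n:ℝ)*t'⌋₊ : ℝ) < (⌊(n:ℝ)*t⌋₊ : ℝ) := by linarith
    exact_mod_cast h2
  have hUb : ∀ᶠ n : ℕ in atTop,
      (n:ℝ) * (F n (⌊(n:ℝ)*t⌋₊ - 1) - F n (⌊(n:ℝ)*t⌋₊ - 1 + 1)) ≤
      (F n ⌊(n:ℝ)*t'⌋₊ - F n ⌊(n:ℝ)*t⌋₊) *
        ((n:ℝ)/((⌊(n:ℝ)*t⌋₊:ℝ) - ⌊(n:ℝ)*t'⌋₊)) := by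
    filter_upwards [hEvLt] with n hab
    set a := ⌊(n:ℝ)*t'⌋₊ with ha
    set b := ⌊(n:ℝ)*t⌋₊ with hb
    have hsum : F n a - F n b = ∑ k ∈ Finset.Ico a b, (F n k - F n (k+1)) :=
      (aux_telescope (F n) a b hab.le).symm
    have hlow : ∀ k ∈ Finset.Ico a b,
        F n (b-1) - F n (b-1+1) ≤ F n k - F n (k+1) := by
      intro k hk
      rw [Finset.mem_Ico] at hk
      exact hanti n k (b-1) (by omega)
    have hcard := Finset.card_nsmul_le_sum (Finset.Ico a b) _ _ hlow
    rw [Nat.card_Ico, nsmul_eq_mul, Nat.cast_sub hab.le, ← hsum] at hcard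
    have hpos : (0:ℝ) < (b:ℝ) - a := by
      have h2 : (a:ℝ) < b := by exact_mod_cast hab
      linarith
    have h1 : F n (b-1) - F n (b-1+1) ≤ (F n a - F n b)/((b:ℝ) - a) :=
      (le_div_iff₀ hpos).mpr (by linarith)
    calc (n:ℝ) * (F n (b-1) - F n (b-1+1))
        ≤ (n:ℝ) * ((F n a - F n b)/((b:ℝ) - a)) :=
          mul_le_mul_of_nonneg_left h1 (Nat.cast_nonneg n)
      _ = (F n a - F n b) * ((n:ℝ)/((b:ℝ) - a)) := by ring
  have hUlim_lt : (φ t' - φ t) * (t - t')⁻¹ < L + ε := by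
    rw [Real.dist_eq] at ht'close
    have habs := abs_lt.mp ht'close
    have h2 : (φ t' - φ t)/(t - t') < L + ε/2 := by linarith [habs.2]
    calc (φ t' - φ t) * (t - t')⁻¹ = (φ t' - φ t)/(t - t') := by
          rw [div_eq_mul_inv]
      _ < L + ε/2 := h2
      _ < L + ε := by linarith
  have hUlt : ∀ᶠ n : ℕ in atTop, (F n ⌊(n:ℝ)*t'⌋₊ - F n ⌊(n:ℝ)*t⌋₊) *
      ((n:ℝ)/((⌊(n:ℝ)*t⌋₊:ℝ) - ⌊(n:ℝ)*t'⌋₊)) < L + ε :=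
    hU.eventually_lt_const hUlim_lt
  -- lower bound sequence V
  have hdiffV : Tendsto (fun n : ℕ => ((⌊(n:ℝ)*t''⌋₊:ℝ) - ⌊(n:ℝ)*t⌋₊ + 1)/n)
      atTop (nhds (t'' - t)) := by
    have h0 : Tendsto (fun n : ℕ =>
        (⌊(n:ℝ)*t''⌋₊:ℝ)/n - (⌊(n:ℝ)*t⌋₊:ℝ)/n + 1/n) atTop (nhds (t'' - t + 0)) :=
      ((hfr t'' ht''pos).sub (hfr t ht)).add tendsto_one_div_atTop_nhds_zero_nat
    rw [add_zero] at h0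
    exact h0.congr fun n => by ring
  have htt'' : t'' - t ≠ 0 := ne_of_gt (by linarith)
  have hinvV : Tendsto (fun n : ℕ => (n:ℝ)/((⌊(n:ℝ)*t''⌋₊:ℝ) - ⌊(n:ℝ)*t⌋₊ + 1))
      atTop (nhds (t'' - t)⁻¹) :=
    (hdiffV.inv₀ htt'').congr fun n => by rw [inv_div]
  have hV : Tendsto (fun n : ℕ => (F n ⌊(n:ℝ)*t⌋₊ - F n ⌊(n:ℝ)*t''⌋₊) *
      ((n:ℝ)/((⌊(n:ℝ)*t''⌋₊:ℝ) - ⌊(n:ℝ)*t⌋₊ + 1))) atTop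
      (nhds ((φ t - φ t'') * (t'' - t)⁻¹)) :=
    ((hmax t ht).sub (hmax t'' ht''pos)).mul hinvV
  have hflTop : Tendsto (fun n : ℕ => ⌊(n:ℝ)*t⌋₊) atTop atTop :=
    tendsto_nat_floor_atTop.comp (tendsto_natCast_atTop_atTop.atTop_mul_const ht)
  have hVb : ∀ᶠ n : ℕ in atTop, (F n ⌊(n:ℝ)*t⌋₊ - F n ⌊(n:ℝ)*t''⌋₊) *
      ((n:ℝ)/((⌊(n:ℝ)*t''⌋₊:ℝ) - ⌊(n:ℝ)*t⌋₊ + 1)) ≤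
      (n:ℝ) * (F n (⌊(n:ℝ)*t⌋₊ - 1) - F n (⌊(n:ℝ)*t⌋₊ - 1 + 1)) := by
    filter_upwards [hflTop.eventually_ge_atTop 1] with n hb1
    set b := ⌊(n:ℝ)*t⌋₊ with hb
    set bb := ⌊(n:ℝ)*t''⌋₊ with hbb
    have hb_le : b ≤ bb := Nat.floor_mono
      (mul_le_mul_of_nonneg_left (le_of_lt ht''gt) (Nat.cast_nonneg n))
    have hab : b - 1 ≤ bb := le_trans (Nat.sub_le b 1) hb_le
    have hsum : F n (b-1) - F n bb = ∑ k ∈ Finset.Ico (b-1) bb, (F n k - F n (k+1)) :=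
      (aux_telescope (F n) (b-1) bb hab).symm
    have hhigh : ∀ k ∈ Finset.Ico (b-1) bb,
        F n k - F n (k+1) ≤ F n (b-1) - F n (b-1+1) := fun k hk =>
      hanti n (b-1) k (Finset.mem_Ico.mp hk).1
    have hcard := Finset.sum_le_card_nsmul (Finset.Ico (b-1) bb) _ _ hhigh
    rw [Nat.card_Ico, nsmul_eq_mul] at hcard
    have hcast : ((bb - (b-1) : ℕ) : ℝ) = (bb:ℝ) - b + 1 := by
      rw [Nat.cast_sub hab, Nat.cast_sub hb1]
      push_cast
      ring
    rw [hcast, ← hsum] at hcard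
    have hFm : F n b ≤ F n (b-1) := hFanti n (Nat.sub_le b 1)
    have hpos : (0:ℝ) < (bb:ℝ) - b + 1 := by
      have h2 : (b:ℝ) ≤ bb := by exact_mod_cast hb_le
      linarith
    have h1 : (F n b - F n bb)/((bb:ℝ) - b + 1) ≤ F n (b-1) - F n (b-1+1) :=
      (div_le_iff₀ hpos).mpr (by linarith)
    calc (F n b - F n bb) * ((n:ℝ)/((bb:ℝ) - b + 1))
        = (n:ℝ) * ((F n b - F n bb)/((bb:ℝ) - b + 1)) := by ring
      _ ≤ (n:ℝ) * (F n (b-1) - F n (b-1+1)) :=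
          mul_le_mul_of_nonneg_left h1 (Nat.cast_nonneg n)
  have hVlim_gt : L - ε < (φ t - φ t'') * (t'' - t)⁻¹ := by
    rw [Real.dist_eq] at ht''close
    have habs := abs_lt.mp ht''close
    have h2 : L - ε/2 < (φ t - φ t'')/(t'' - t) := by linarith [habs.1]
    calc L - ε < L - ε/2 := by linarith
      _ < (φ t - φ t'')/(t'' - t) := h2
      _ = (φ t - φ t'') * (t'' - t)⁻¹ := by rw [div_eq_mul_inv]
  have hVgt : ∀ᶠ n : ℕ in atTop, L - ε < (F n ⌊(n:ℝ)*t⌋₊ - F n ⌊(n:ℝ)*t''⌋₊) *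
      ((n:ℝ)/((⌊(n:ℝ)*t''⌋₊:ℝ) - ⌊(n:ℝ)*t⌋₊ + 1)) :=
    hV.eventually_const_lt hVlim_gt
  have hfinal : ∀ᶠ n : ℕ in atTop,
      dist ((n:ℝ) * (F n (⌊(n:ℝ)*t⌋₊ - 1) - F n (⌊(n:ℝ)*t⌋₊ - 1 + 1))) L < ε := by
    filter_upwards [hUb, hUlt, hVb, hVgt] with n h1 h2 h3 h4
    rw [Real.dist_eq, abs_lt]
    constructor <;> linarith
  exact eventually_atTop.mp hfinal

private lemma aux_meas {Ω : Type*} [MeasurableSpace Ω]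
    (ξ : ℕ → Ω → ℝ) (hmeas : ∀ j, Measurable (ξ j)) (a b : ℕ) (c : ℝ) :
    MeasurableSet {ω | ∀ j, a ≤ j → j ≤ b → ξ j ω ≤ c} := by
  have he : {ω | ∀ j, a ≤ j → j ≤ b → ξ j ω ≤ c}
      = ⋂ j, {ω | a ≤ j → j ≤ b → ξ j ω ≤ c} := by
    ext ω; simp [Set.mem_iInter]
  rw [he]
  refine MeasurableSet.iInter fun j => ?_
  by_cases h1 : a ≤ j ∧ j ≤ b
  · simp only [h1.1, h1.2, forall_true_left]
    exact measurableSet_le (hmeas j) measurable_const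
  · have : {ω | a ≤ j → j ≤ b → ξ j ω ≤ c} = Set.univ := by
      ext ω; simp only [Set.mem_setOf_eq, Set.mem_univ, iff_true]
      intro hj1 hj2; exact absurd ⟨hj1, hj2⟩ h1
    rw [this]; exact MeasurableSet.univ

private lemma aux_shift {Ω : Type*} [MeasurableSpace Ω] (μ : Measure Ω)
    (ξ : ℕ → Ω → ℝ) (hmeas : ∀ j, Measurable (ξ j))
    (hstat : ∀ m : ℕ,
      Measure.map (fun ω => (fun i : ℕ => ξ (i + m) ω)) μ
        = Measure.map (fun ω => (fun i : ℕ => ξ i ω)) μ)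
    (c : ℝ) (k : ℕ) :
    μ {ω | ∀ j, 2 ≤ j → j ≤ k + 1 → ξ j ω ≤ c}
      = μ {ω | ∀ j, 1 ≤ j → j ≤ k → ξ j ω ≤ c} := by
  have hS : MeasurableSet {f : ℕ → ℝ | ∀ j, 1 ≤ j → j ≤ k → f j ≤ c} := by
    have he : {f : ℕ → ℝ | ∀ j, 1 ≤ j → j ≤ k → f j ≤ c}
        = ⋂ j, {f : ℕ → ℝ | 1 ≤ j → j ≤ k → f j ≤ c} := by
      ext f; simp [Set.mem_iInter]
    rw [he]
    refine MeasurableSet.iInter fun j => ?_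
    by_cases h1 : 1 ≤ j ∧ j ≤ k
    · simp only [h1.1, h1.2, forall_true_left]
      exact measurableSet_le (measurable_pi_apply j) measurable_const
    · have : {f : ℕ → ℝ | 1 ≤ j → j ≤ k → f j ≤ c} = Set.univ := by
        ext f; simp only [Set.mem_setOf_eq, Set.mem_univ, iff_true]
        intro hj1 hj2; exact absurd ⟨hj1, hj2⟩ h1
      rw [this]; exact MeasurableSet.univ
  have hm0 : Measurable (fun ω => (fun i : ℕ => ξ i ω)) :=
    measurable_pi_lambda _ fun i => hmeas i
  have hm1 : Measurable (fun ω => (fun i : ℕ => ξ (i + 1) ω)) :=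
    measurable_pi_lambda _ fun i => hmeas (i + 1)
  have h := congrArg (fun ν : Measure (ℕ → ℝ) =>
    ν {f : ℕ → ℝ | ∀ j, 1 ≤ j → j ≤ k → f j ≤ c}) (hstat 1)
  simp only [Measure.map_apply hm1 hS, Measure.map_apply hm0 hS] at h
  have hpre : (fun ω => (fun i : ℕ => ξ (i + 1) ω)) ⁻¹'
      {f : ℕ → ℝ | ∀ j, 1 ≤ j → j ≤ k → f j ≤ c}
      = {ω | ∀ j, 2 ≤ j → j ≤ k + 1 → ξ j ω ≤ c} := by
    ext ω
    simp only [Set.mem_preimage, Set.mem_setOf_eq]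
    constructor
    · intro h j h2 hk
      have e : j - 1 + 1 = j := by omega
      have := h (j - 1) (by omega) (by omega)
      rwa [e] at this
    · intro h j h1 hk
      exact h (j + 1) (by omega) (by omega)
  have hpre0 : (fun ω => (fun i : ℕ => ξ i ω)) ⁻¹'
      {f : ℕ → ℝ | ∀ j, 1 ≤ j → j ≤ k → f j ≤ c}
      = {ω | ∀ j, 1 ≤ j → j ≤ k → ξ j ω ≤ c} := rfl
  rw [hpre, hpre0] at h
  exact h
private lemma aux_D_eq {Ω : Type*} [MeasurableSpace Ω] (μ : Measure Ω)
    [IsProbabilityMeasure μ]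
    (ξ : ℕ → Ω → ℝ) (hmeas : ∀ j, Measurable (ξ j))
    (hstat : ∀ m : ℕ,
      Measure.map (fun ω => (fun i : ℕ => ξ (i + m) ω)) μ
        = Measure.map (fun ω => (fun i : ℕ => ξ i ω)) μ)
    (c : ℝ) (k : ℕ) :
    (μ {ω | ∀ j, 1 ≤ j → j ≤ k → ξ j ω ≤ c}).toReal
      - (μ {ω | ∀ j, 1 ≤ j → j ≤ k + 1 → ξ j ω ≤ c}).toReal
    = (μ ({ω | ∀ j, 2 ≤ j → j ≤ k + 1 → ξ j ω ≤ c} ∩ {ω | c < ξ 1 ω})).toReal := by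
  set C := {ω | ∀ j, 2 ≤ j → j ≤ k + 1 → ξ j ω ≤ c} with hC
  have hB : MeasurableSet {ω | c < ξ 1 ω} :=
    measurableSet_lt measurable_const (hmeas 1)
  have hsplit := measure_inter_add_diff C hB (μ := μ)
  have hdiffeq : C \ {ω | c < ξ 1 ω} = {ω | ∀ j, 1 ≤ j → j ≤ k + 1 → ξ j ω ≤ c} := by
    ext ω
    simp only [hC, Set.mem_diff, Set.mem_setOf_eq, not_lt]
    constructor
    · rintro ⟨h1, h2⟩ j hj1 hj2
      rcases Nat.lt_or_ge j 2 with hj | hj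
      · have : j = 1 := by omega
        rwa [this]
      · exact h1 j hj hj2
    · intro h
      exact ⟨fun j hj1 hj2 => h j (by omega) hj2, h 1 le_rfl (by omega)⟩
  rw [hdiffeq] at hsplit
  have hshift := aux_shift μ ξ hmeas hstat c k
  rw [← hC] at hshift
  rw [← hshift, ← hsplit]
  rw [ENNReal.toReal_add (measure_ne_top μ _) (measure_ne_top μ _)]
  ring

/-- For a strictly stationary sequence `ξ` with `n·P(ξ₁ > u_n) → λ` and
`P(max_{1≤j≤⌊nt⌋} ξ_j ≤ u_n) → e^{-θλt}` for all `t > 0`, one has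
`P(max_{2≤j≤⌊nt⌋} ξ_j > u_n | ξ₁ > u_n) → 1 − θe^{-θλt}` for every `t > 0`. -/
theorem stmt_1 {Ω : Type*} [MeasurableSpace Ω] (μ : Measure Ω) [IsProbabilityMeasure μ]
    (ξ : ℕ → Ω → ℝ) (hmeas : ∀ j, Measurable (ξ j))
    -- strict stationarity: the law of the process is shift invariant
    (hstat : ∀ m : ℕ,
      Measure.map (fun ω => (fun i : ℕ => ξ (i + m) ω)) μ
        = Measure.map (fun ω => (fun i : ℕ => ξ i ω)) μ)
    (lam θ : ℝ) (hlam : 0 < lam) (hθ : 0 < θ) (u : ℕ → ℝ)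
    (htail : Tendsto (fun n : ℕ => (n : ℝ) * (μ {ω | u n < ξ 1 ω}).toReal)
      atTop (nhds lam))
    (hmax : ∀ t : ℝ, 0 < t →
      Tendsto (fun n : ℕ =>
          (μ {ω | ∀ j, 1 ≤ j → j ≤ ⌊(n : ℝ) * t⌋₊ → ξ j ω ≤ u n}).toReal)
        atTop (nhds (Real.exp (-θ * lam * t)))) :
    ∀ t : ℝ, 0 < t →
      Tendsto (fun n : ℕ =>
          (μ ({ω | ∃ j, 2 ≤ j ∧ j ≤ ⌊(n : ℝ) * t⌋₊ ∧ u n < ξ j ω}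
              ∩ {ω | u n < ξ 1 ω})).toReal / (μ {ω | u n < ξ 1 ω}).toReal)
        atTop (nhds (1 - θ * Real.exp (-θ * lam * t))) := by
  intro t ht
  set F : ℕ → ℕ → ℝ :=
    fun n k => (μ {ω | ∀ j, 1 ≤ j → j ≤ k → ξ j ω ≤ u n}).toReal with hF
  set Q : ℕ → ℝ := fun n => (μ {ω | u n < ξ 1 ω}).toReal with hQ
  have hD : ∀ n k, F n k - F n (k+1) =
      (μ ({ω | ∀ j, 2 ≤ j → j ≤ k + 1 → ξ j ω ≤ u n} ∩ {ω | u n < ξ 1 ω})).toReal :=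
    fun n k => aux_D_eq μ ξ hmeas hstat (u n) k
  have hanti : ∀ n k l, k ≤ l → F n l - F n (l+1) ≤ F n k - F n (k+1) := by
    intro n k l hkl
    rw [hD, hD]
    refine ENNReal.toReal_mono (measure_ne_top μ _) (measure_mono ?_)
    refine Set.inter_subset_inter ?_ (subset_refl _)
    intro ω hω j h2 hk
    exact hω j h2 (by omega)
  have hnonneg : ∀ n k, 0 ≤ F n k - F n (k+1) := by
    intro n k; rw [hD]; exact ENNReal.toReal_nonneg
  have hkey := aux_key F lam θ t ht hlam hθ hanti hnonneg (fun s hs => hmax s hs)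
  have hQ' : Tendsto (fun n : ℕ => (n:ℝ) * Q n) atTop (nhds lam) := htail
  have hQpos : ∀ᶠ n : ℕ in atTop, 0 < Q n := by
    have h1 := hQ'.eventually_const_lt (show lam/2 < lam by linarith)
    filter_upwards [h1, eventually_ge_atTop 1] with n h2 hn
    have hn' : (0:ℝ) < n := by exact_mod_cast hn
    by_contra hc
    push_neg at hc
    have h3 : (n:ℝ) * Q n ≤ (n:ℝ) * 0 := mul_le_mul_of_nonneg_left hc hn'.le
    rw [mul_zero] at h3
    linarith
  have hratio : Tendsto (fun n : ℕ =>
      (F n (⌊(n:ℝ)*t⌋₊ - 1) - F n (⌊(n:ℝ)*t⌋₊ - 1 + 1)) / Q n) atTop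
      (nhds (θ * Real.exp (-θ * lam * t))) := by
    have hdiv := hkey.div hQ' (ne_of_gt hlam)
    have hval : θ * lam * Real.exp (-θ*lam*t) / lam = θ * Real.exp (-θ*lam*t) := by
      field_simp
    rw [hval] at hdiv
    refine hdiv.congr' ?_
    filter_upwards [eventually_ge_atTop 1] with n hn
    have hn' : ((n:ℝ)) ≠ 0 := by
      have : (0:ℝ) < n := by exact_mod_cast hn
      exact ne_of_gt this
    show (n:ℝ) * _ / ((n:ℝ) * Q n) = _
    rw [mul_div_mul_left _ _ hn']
  have hflTop : Tendsto (fun n : ℕ => ⌊(n:ℝ)*t⌋₊) atTop atTop :=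
    tendsto_nat_floor_atTop.comp (tendsto_natCast_atTop_atTop.atTop_mul_const ht)
  have hfinal : ∀ᶠ n : ℕ in atTop,
      (μ ({ω | ∃ j, 2 ≤ j ∧ j ≤ ⌊(n:ℝ)*t⌋₊ ∧ u n < ξ j ω}
          ∩ {ω | u n < ξ 1 ω})).toReal / Q n
      = 1 - (F n (⌊(n:ℝ)*t⌋₊ - 1) - F n (⌊(n:ℝ)*t⌋₊ - 1 + 1)) / Q n := by
    filter_upwards [hQpos, hflTop.eventually_ge_atTop 1] with n hQn hm1
    set m := ⌊(n:ℝ)*t⌋₊ with hm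
    have hmm : m - 1 + 1 = m := by omega
    have measA : MeasurableSet {ω | ∃ j, 2 ≤ j ∧ j ≤ m ∧ u n < ξ j ω} := by
      have he : {ω | ∃ j, 2 ≤ j ∧ j ≤ m ∧ u n < ξ j ω}
          = ⋃ j ∈ Finset.Icc 2 m, {ω | u n < ξ j ω} := by
        ext ω
        simp [Finset.mem_Icc, and_assoc]
      rw [he]
      exact (Finset.Icc 2 m).measurableSet_biUnion fun j _ =>
        measurableSet_lt measurable_const (hmeas j)
    have hsplit := measure_inter_add_diff {ω | u n < ξ 1 ω} measA (μ := μ)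
    have hBA : {ω | u n < ξ 1 ω} ∩ {ω | ∃ j, 2 ≤ j ∧ j ≤ m ∧ u n < ξ j ω}
        = {ω | ∃ j, 2 ≤ j ∧ j ≤ m ∧ u n < ξ j ω} ∩ {ω | u n < ξ 1 ω} :=
      Set.inter_comm _ _
    have hBdiff : {ω | u n < ξ 1 ω} \ {ω | ∃ j, 2 ≤ j ∧ j ≤ m ∧ u n < ξ j ω}
        = {ω | ∀ j, 2 ≤ j → j ≤ (m - 1) + 1 → ξ j ω ≤ u n} ∩ {ω | u n < ξ 1 ω} := by
      rw [hmm]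
      ext ω
      simp only [Set.mem_diff, Set.mem_setOf_eq, Set.mem_inter_iff, not_exists,
        not_and, not_lt]
      constructor
      · rintro ⟨h1, h2⟩
        exact ⟨fun j hj2 hjm => h2 j hj2 hjm, h1⟩
      · rintro ⟨h1, h2⟩
        exact ⟨h2, fun j hj2 hjm => h1 j hj2 hjm⟩
    rw [hBA, hBdiff] at hsplit
    have htr := congrArg ENNReal.toReal hsplit
    rw [ENNReal.toReal_add (measure_ne_top μ _) (measure_ne_top μ _)] at htr
    have hQeq : Q n = (μ {ω | u n < ξ 1 ω}).toReal := rfl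
    rw [hD n (m - 1)]
    rw [eq_sub_iff_add_eq, ← add_div, div_eq_one_iff_eq (ne_of_gt hQn)]
    rw [hQeq]
    exact htr
  exact ((tendsto_const_nhds.sub hratio).congr'
    (hfinal.mono fun n h => h.symm))
end

section
/- Let {Z_j : j ≥ 1} be a strictly stationary sequence of real random vectors such that the maximal correlation coefficients ρ(n) satisfy ∑_{j=0}^∞ ρ(2^j) < ∞. For a > 0 let Z_j(a) = Z_j·1{|Z_j| ≤ a} − E(Z_j·1{|Z_j| ≤ a}) and S_k = ∑_{j=2}^{k+1} Z_j(a). Then there is a constant C₂, depending only on (ρ(n)), such that ‖S_n‖₂ ≤ C₂ √n ‖Z₁(a)‖₂ for every a > 0 and n ≥ 1, where ‖Y‖₂ = √(E⟨Y,Y⟩). -/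
open MeasureTheory Filter Set

set_option maxHeartbeats 1000000

lemma sum_div4 (f : ℕ → ℝ) (m : ℕ) :
    ∑ s ∈ Finset.range (4 * m), f (s / 4) = 4 * ∑ j ∈ Finset.range m, f j := by
  induction m with
  | zero => simp
  | succ m ih =>
      have h4 : 4 * (m + 1) = (4 * m) + 1 + 1 + 1 + 1 := by ring
      rw [h4, Finset.sum_range_succ, Finset.sum_range_succ, Finset.sum_range_succ,
        Finset.sum_range_succ, ih, Finset.sum_range_succ]
      have h0 : (4 * m) / 4 = m := by omega
      have h1 : (4 * m + 1) / 4 = m := by omega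
      have h2 : (4 * m + 1 + 1) / 4 = m := by omega
      have h3 : (4 * m + 1 + 1 + 1) / 4 = m := by omega
      rw [h0, h1, h2, h3]; ring

lemma sum_div4_le (f : ℕ → ℝ) (hf : ∀ j, 0 ≤ f j) (r : ℕ) :
    ∑ s ∈ Finset.range r, f (s / 4) ≤ 4 * ∑ j ∈ Finset.range r, f j := by
  calc ∑ s ∈ Finset.range r, f (s / 4)
      ≤ ∑ s ∈ Finset.range (4 * r), f (s / 4) := by
        apply Finset.sum_le_sum_of_subset_of_nonneg
        · exact Finset.range_subset_range.2 (by omega)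
        · intro _ _ _; exact hf _
    _ = 4 * ∑ j ∈ Finset.range r, f j := sum_div4 f r

noncomputable def uAux (ρ : ℕ → ℝ) : ℕ → ℝ
  | 0 => 1
  | (r + 1) => Real.sqrt 2 * Real.sqrt (1 + ρ (2 ^ (r / 4))) * uAux ρ r + 2 ^ (r / 4)

lemma one_le_sqrt2 : (1:ℝ) ≤ Real.sqrt 2 := Real.one_le_sqrt.mpr one_le_two

lemma one_le_uAux (ρ : ℕ → ℝ) (hρ0 : ∀ n, 0 ≤ ρ n) : ∀ r, 1 ≤ uAux ρ r := by
  intro r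
  induction r with
  | zero => simp [uAux]
  | succ r ih =>
      have hβ : (1:ℝ) ≤ Real.sqrt (1 + ρ (2 ^ (r / 4))) :=
        Real.one_le_sqrt.mpr (by linarith [hρ0 (2 ^ (r / 4))])
      have hh : (0:ℝ) ≤ 2 ^ (r / 4) := by positivity
      have h1 : (1:ℝ) * 1 ≤ Real.sqrt 2 * Real.sqrt (1 + ρ (2 ^ (r / 4))) :=
        mul_le_mul one_le_sqrt2 hβ zero_le_one (by linarith [one_le_sqrt2])
      have h2 : (1:ℝ) * 1 ≤ (Real.sqrt 2 * Real.sqrt (1 + ρ (2 ^ (r / 4)))) * uAux ρ r :=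
        mul_le_mul (by linarith) ih zero_le_one (by linarith)
      simp only [uAux]; linarith

lemma uAux_mono (ρ : ℕ → ℝ) (hρ0 : ∀ n, 0 ≤ ρ n) (r : ℕ) : uAux ρ r ≤ uAux ρ (r + 1) := by
  have hβ : (1:ℝ) ≤ Real.sqrt (1 + ρ (2 ^ (r / 4))) :=
    Real.one_le_sqrt.mpr (by linarith [hρ0 (2 ^ (r / 4))])
  have hu := one_le_uAux ρ hρ0 r
  have hh : (0:ℝ) ≤ 2 ^ (r / 4) := by positivity
  have h1 : (1:ℝ) * 1 ≤ Real.sqrt 2 * Real.sqrt (1 + ρ (2 ^ (r / 4))) :=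
    mul_le_mul one_le_sqrt2 hβ zero_le_one (by linarith [one_le_sqrt2])
  have h2 : (1:ℝ) * uAux ρ r ≤ (Real.sqrt 2 * Real.sqrt (1 + ρ (2 ^ (r / 4)))) * uAux ρ r :=
    mul_le_mul_of_nonneg_right (by linarith) (by linarith)
  simp only [uAux]; linarith

lemma uAux_le_W (ρ : ℕ → ℝ) (hρ0 : ∀ n, 0 ≤ ρ n) (r : ℕ) :
    uAux ρ r ≤ (∏ s ∈ Finset.range r, Real.sqrt (1 + ρ (2 ^ (s / 4)))) *
      (1 + ∑ s ∈ Finset.range r, (2:ℝ) ^ (s / 4) * ((Real.sqrt 2) ^ (s + 1))⁻¹) *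
        (Real.sqrt 2) ^ r := by
  induction r with
  | zero => simp [uAux]
  | succ r ih =>
      have hβ : (1:ℝ) ≤ Real.sqrt (1 + ρ (2 ^ (r / 4))) :=
        Real.one_le_sqrt.mpr (by linarith [hρ0 (2 ^ (r / 4))])
      have hP : (1:ℝ) ≤ ∏ s ∈ Finset.range r, Real.sqrt (1 + ρ (2 ^ (s / 4))) :=
        by
          have := Finset.prod_le_prod (s := Finset.range r)
            (f := fun _ => (1:ℝ)) (g := fun s => Real.sqrt (1 + ρ (2 ^ (s / 4))))
            (fun i _ => zero_le_one)
            (fun i _ => Real.one_le_sqrt.mpr (by linarith [hρ0 (2 ^ (i / 4))]))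
          simpa using this
      have hS : (0:ℝ) ≤ ∑ s ∈ Finset.range r, (2:ℝ) ^ (s / 4) * ((Real.sqrt 2) ^ (s + 1))⁻¹ :=
        Finset.sum_nonneg fun s _ => by positivity
      have hh : (0:ℝ) ≤ 2 ^ (r / 4) := by positivity
      have hsqrt2 : (0:ℝ) < Real.sqrt 2 := by positivity
      set P := ∏ s ∈ Finset.range r, Real.sqrt (1 + ρ (2 ^ (s / 4))) with hPdef
      set S := ∑ s ∈ Finset.range r, (2:ℝ) ^ (s / 4) * ((Real.sqrt 2) ^ (s + 1))⁻¹ with hSdef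
      set β := Real.sqrt (1 + ρ (2 ^ (r / 4))) with hβdef
      have hprod : ∏ s ∈ Finset.range (r+1), Real.sqrt (1 + ρ (2 ^ (s / 4))) = P * β := by
        rw [Finset.prod_range_succ]
      have hsum : ∑ s ∈ Finset.range (r+1), (2:ℝ) ^ (s / 4) * ((Real.sqrt 2) ^ (s + 1))⁻¹
          = S + (2:ℝ) ^ (r / 4) * ((Real.sqrt 2) ^ (r + 1))⁻¹ := by
        rw [Finset.sum_range_succ]
      rw [hprod, hsum]
      have hcancel : ((Real.sqrt 2) ^ (r + 1))⁻¹ * (Real.sqrt 2) ^ (r + 1) = 1 :=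
        inv_mul_cancel₀ (by positivity)
      have hexp : uAux ρ (r+1) = Real.sqrt 2 * β * uAux ρ r + 2 ^ (r / 4) := rfl
      rw [hexp]
      have step1 : Real.sqrt 2 * β * uAux ρ r ≤ Real.sqrt 2 * β * (P * (1 + S) * (Real.sqrt 2) ^ r) := by
        apply mul_le_mul_of_nonneg_left ih
        positivity
      have key : P * β * (1 + (S + (2:ℝ) ^ (r / 4) * ((Real.sqrt 2) ^ (r + 1))⁻¹)) * (Real.sqrt 2) ^ (r+1)
          = Real.sqrt 2 * β * (P * (1 + S) * (Real.sqrt 2) ^ r) + P * β * ((2:ℝ) ^ (r / 4)) := by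
        have h1 : (Real.sqrt 2) ^ (r+1) = Real.sqrt 2 * (Real.sqrt 2) ^ r := by ring
        field_simp
        ring
      rw [key]
      have h1b : (1:ℝ) * 1 ≤ P * β := mul_le_mul hP hβ zero_le_one (by linarith)
      have : (1:ℝ) * (2:ℝ) ^ (r / 4) ≤ (P * β) * ((2:ℝ) ^ (r / 4)) :=
        mul_le_mul_of_nonneg_right (by linarith) hh
      linarith

lemma uAux_le (ρ : ℕ → ℝ) (hρ0 : ∀ n, 0 ≤ ρ n)
    (hsum : Summable (fun j : ℕ => ρ (2 ^ j))) (r : ℕ) :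
    uAux ρ r ≤ 9 * Real.exp (4 * ∑' j : ℕ, ρ (2 ^ j)) * (Real.sqrt 2) ^ r := by
  have hP : (∏ s ∈ Finset.range r, Real.sqrt (1 + ρ (2 ^ (s / 4))))
      ≤ Real.exp (4 * ∑' j : ℕ, ρ (2 ^ j)) := by
    calc (∏ s ∈ Finset.range r, Real.sqrt (1 + ρ (2 ^ (s / 4))))
        ≤ ∏ s ∈ Finset.range r, Real.exp (ρ (2 ^ (s / 4))) := by
          apply Finset.prod_le_prod
          · intro i _; positivity
          · intro i _
            have h1 : Real.sqrt (1 + ρ (2 ^ (i / 4))) ≤ 1 + ρ (2 ^ (i / 4)) := by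
              have h0 : (0:ℝ) ≤ 1 + ρ (2 ^ (i / 4)) := by linarith [hρ0 (2 ^ (i / 4))]
              have := Real.sqrt_le_sqrt (show 1 + ρ (2 ^ (i / 4)) ≤ (1 + ρ (2 ^ (i / 4)))^2 by nlinarith [hρ0 (2 ^ (i / 4))])
              rwa [Real.sqrt_sq h0] at this
            have h2 : 1 + ρ (2 ^ (i / 4)) ≤ Real.exp (ρ (2 ^ (i / 4))) := by
              linarith [Real.add_one_le_exp (ρ (2 ^ (i / 4)))]
            linarith
      _ = Real.exp (∑ s ∈ Finset.range r, ρ (2 ^ (s / 4))) := (Real.exp_sum _ _).symm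
      _ ≤ Real.exp (4 * ∑' j : ℕ, ρ (2 ^ j)) := by
          apply Real.exp_le_exp.mpr
          calc ∑ s ∈ Finset.range r, ρ (2 ^ (s / 4))
              ≤ 4 * ∑ j ∈ Finset.range r, ρ (2 ^ j) :=
                sum_div4_le (fun j => ρ (2 ^ j)) (fun j => hρ0 _) r
            _ ≤ 4 * ∑' j : ℕ, ρ (2 ^ j) := by
                have := Summable.sum_le_tsum (Finset.range r) (fun j _ => hρ0 (2 ^ j)) hsum
                linarith
  have hS : (∑ s ∈ Finset.range r, (2:ℝ) ^ (s / 4) * ((Real.sqrt 2) ^ (s + 1))⁻¹) ≤ 8 := by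
    calc (∑ s ∈ Finset.range r, (2:ℝ) ^ (s / 4) * ((Real.sqrt 2) ^ (s + 1))⁻¹)
        ≤ ∑ s ∈ Finset.range r, ((1:ℝ)/2) ^ (s / 4) := by
          apply Finset.sum_le_sum
          intro s _
          have hpow : ((2:ℝ) ^ (s / 4)) * ((2:ℝ) ^ (s / 4)) ≤ (Real.sqrt 2) ^ (s + 1) := by
            have h1 : (Real.sqrt 2) ^ (4 * (s / 4)) ≤ (Real.sqrt 2) ^ (s + 1) :=
              pow_le_pow_right₀ one_le_sqrt2 (by omega)
            have h2 : (Real.sqrt 2) ^ (4 * (s / 4)) = ((2:ℝ) ^ (s / 4)) * ((2:ℝ) ^ (s / 4)) := by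
              rw [pow_mul]
              have : (Real.sqrt 2) ^ (4:ℕ) = 4 := by
                rw [show (4:ℕ) = 2 * 2 by rfl, pow_mul, Real.sq_sqrt (by norm_num : (0:ℝ) ≤ 2)]
                norm_num
              rw [this]
              rw [show (4:ℝ) = 2 * 2 by norm_num, mul_pow]
            linarith [h2 ▸ h1]
          have hpos : (0:ℝ) < (2:ℝ) ^ (s / 4) := by positivity
          have hpos2 : (0:ℝ) < (Real.sqrt 2) ^ (s + 1) := by positivity
          rw [show ((1:ℝ)/2) ^ (s/4) = ((2:ℝ) ^ (s/4))⁻¹ by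
            rw [div_pow, one_pow, one_div]]
          rw [mul_inv_le_iff₀ hpos2, inv_mul_eq_div, le_div_iff₀ hpos]
          exact hpow
      _ ≤ 4 * ∑ j ∈ Finset.range r, ((1:ℝ)/2) ^ j :=
          sum_div4_le _ (fun j => by positivity) r
      _ ≤ 4 * 2 := by
          have hgs : Summable (fun j : ℕ => ((1:ℝ)/2) ^ j) :=
            summable_geometric_of_lt_one (by norm_num) (by norm_num)
          have := Summable.sum_le_tsum (f := fun j : ℕ => ((1:ℝ)/2) ^ j) (Finset.range r)
            (fun j _ => by positivity) hgs
          rw [tsum_geometric_two] at this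
          linarith
      _ = 8 := by norm_num
  have hW := uAux_le_W ρ hρ0 r
  have hpow : (0:ℝ) ≤ (Real.sqrt 2) ^ r := by positivity
  have hSnn : (0:ℝ) ≤ ∑ s ∈ Finset.range r, (2:ℝ) ^ (s / 4) * ((Real.sqrt 2) ^ (s + 1))⁻¹ :=
    Finset.sum_nonneg fun s _ => by positivity
  have hexppos : (0:ℝ) < Real.exp (4 * ∑' j : ℕ, ρ (2 ^ j)) := Real.exp_pos _
  calc uAux ρ r ≤ (∏ s ∈ Finset.range r, Real.sqrt (1 + ρ (2 ^ (s / 4)))) *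
      (1 + ∑ s ∈ Finset.range r, (2:ℝ) ^ (s / 4) * ((Real.sqrt 2) ^ (s + 1))⁻¹) *
        (Real.sqrt 2) ^ r := hW
    _ ≤ Real.exp (4 * ∑' j : ℕ, ρ (2 ^ j)) * 9 * (Real.sqrt 2) ^ r := by
        apply mul_le_mul_of_nonneg_right _ hpow
        apply mul_le_mul hP (by linarith) (by linarith) (le_of_lt hexppos)
    _ = 9 * Real.exp (4 * ∑' j : ℕ, ρ (2 ^ j)) * (Real.sqrt 2) ^ r := by ring


lemma euclid_sum_apply {d : ℕ} (F : Finset ℕ) (f : ℕ → EuclideanSpace ℝ (Fin d)) (i : Fin d) :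
    (∑ j ∈ F, f j) i = ∑ j ∈ F, f j i := by
  classical
  induction F using Finset.induction_on with
  | empty => rfl
  | @insert j s hj ih => rw [Finset.sum_insert hj, Finset.sum_insert hj, ← ih]; rfl

lemma euclid_abs_coord {d : ℕ} (x : EuclideanSpace ℝ (Fin d)) (i : Fin d) : |x i| ≤ ‖x‖ := by
  rw [EuclideanSpace.norm_eq, ← Real.sqrt_sq_eq_abs]
  apply Real.sqrt_le_sqrt
  have := Finset.single_le_sum (f := fun i => ‖x i‖ ^ 2) (fun j _ => by positivity)
    (Finset.mem_univ i)
  simpa [sq_abs] using this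

lemma euclid_norm_sq {d : ℕ} (x : EuclideanSpace ℝ (Fin d)) : ‖x‖ ^ 2 = ∑ i, (x i) ^ 2 := by
  rw [EuclideanSpace.norm_eq, Real.sq_sqrt (Finset.sum_nonneg fun i _ => sq_nonneg _)]
  simp [sq_abs]

/-- Under `∑_j ρ(2^j) < ∞` for the maximal correlation coefficients of a strictly
stationary sequence, the truncated centered partial sums satisfy
`‖S_n‖₂ ≤ C₂ √n ‖Z₁(a)‖₂` for all `a > 0` and `n ≥ 1`, where
`Z_j(a) = Z_j·1{|Z_j| ≤ a} − E(Z_j·1{|Z_j| ≤ a})` and `S_k = ∑_{j=2}^{k+1} Z_j(a)`. -/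
theorem stmt_13 {Ω : Type*} [m0 : MeasurableSpace Ω] (μ : Measure Ω) [IsProbabilityMeasure μ]
    {d : ℕ} (Z : ℕ → Ω → EuclideanSpace ℝ (Fin d)) (hmeas : ∀ j, Measurable (Z j))
    -- strict stationarity: the law of the process is shift invariant
    (hstat : ∀ m : ℕ,
      Measure.map (fun ω => (fun i : ℕ => Z (i + m) ω)) μ
        = Measure.map (fun ω => (fun i : ℕ => Z i ω)) μ)
    (ρ : ℕ → ℝ) (hρ0 : ∀ n, 0 ≤ ρ n) (hρmono : ∀ m n : ℕ, m ≤ n → ρ n ≤ ρ m)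
    -- `ρ n` dominates the maximal correlation between past and future
    (hcorr : ∀ n k : ℕ, ∀ f g : Ω → ℝ,
      Measurable[⨆ i ∈ Set.Icc 1 k, MeasurableSpace.comap (Z i) inferInstance] f →
      Measurable[⨆ i ∈ Set.Ici (n + k), MeasurableSpace.comap (Z i) inferInstance] g →
      Integrable (fun ω => (f ω) ^ 2) μ → Integrable (fun ω => (g ω) ^ 2) μ →
      |(∫ ω, f ω * g ω ∂μ) - (∫ ω, f ω ∂μ) * (∫ ω, g ω ∂μ)| ≤
        ρ n * Real.sqrt (∫ ω, (f ω - ∫ ω', f ω' ∂μ) ^ 2 ∂μ)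
          * Real.sqrt (∫ ω, (g ω - ∫ ω', g ω' ∂μ) ^ 2 ∂μ))
    (hsum : Summable (fun j : ℕ => ρ (2 ^ j))) :
    ∃ C₂ : ℝ, ∀ a : ℝ, 0 < a → ∀ n : ℕ, 1 ≤ n →
      Real.sqrt (∫ ω, ‖∑ j ∈ Finset.Icc 2 (n + 1),
          (Set.indicator {ω' | ‖Z j ω'‖ ≤ a} (Z j) ω
            - ∫ ω', Set.indicator {ω'' | ‖Z j ω''‖ ≤ a} (Z j) ω' ∂μ)‖ ^ 2 ∂μ) ≤
        C₂ * Real.sqrt n *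
          Real.sqrt (∫ ω, ‖Set.indicator {ω' | ‖Z 1 ω'‖ ≤ a} (Z 1) ω
            - ∫ ω', Set.indicator {ω'' | ‖Z 1 ω''‖ ≤ a} (Z 1) ω' ∂μ‖ ^ 2 ∂μ) := by
  classical
  refine ⟨9 * Real.exp (4 * ∑' j : ℕ, ρ (2 ^ j)) * Real.sqrt 2, ?_⟩
  intro a ha n hn
  set φ : EuclideanSpace ℝ (Fin d) → EuclideanSpace ℝ (Fin d) :=
    Set.indicator {y : EuclideanSpace ℝ (Fin d) | ‖y‖ ≤ a} id with hφdef
  have hφmeas : Measurable φ :=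
    measurable_id.indicator ((isClosed_le continuous_norm continuous_const).measurableSet)
  have hφbdd : ∀ x : EuclideanSpace ℝ (Fin d), ‖φ x‖ ≤ a := by
    intro x
    by_cases h : ‖x‖ ≤ a
    · rw [hφdef, Set.indicator_of_mem (by exact h)]; exact h
    · rw [hφdef, Set.indicator_of_notMem (by exact h)]
      simp [ha.le]
  have hind : ∀ j, Set.indicator {ω' | ‖Z j ω'‖ ≤ a} (Z j) = fun ω => φ (Z j ω) :=
    fun j => rfl
  -- stationarity transfer
  have hseq : Measurable (fun ω => (fun i : ℕ => Z i ω)) := measurable_pi_lambda _ hmeas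
  have htransR : ∀ (m : ℕ) (G : (ℕ → EuclideanSpace ℝ (Fin d)) → ℝ), Measurable G →
      ∫ ω, G (fun i => Z (i + m) ω) ∂μ = ∫ ω, G (fun i => Z i ω) ∂μ := by
    intro m G hG
    have hshift : Measurable (fun ω => (fun i : ℕ => Z (i + m) ω)) :=
      measurable_pi_lambda _ (fun i => hmeas (i + m))
    have hGsm1 := hG.stronglyMeasurable.aestronglyMeasurable
      (μ := Measure.map (fun ω => (fun i : ℕ => Z (i + m) ω)) μ)
    have hGsm2 := hG.stronglyMeasurable.aestronglyMeasurable
      (μ := Measure.map (fun ω => (fun i : ℕ => Z i ω)) μ)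
    rw [← integral_map hshift.aemeasurable hGsm1, ← integral_map hseq.aemeasurable hGsm2,
      hstat m]
  have htransE : ∀ (m : ℕ) (G : (ℕ → EuclideanSpace ℝ (Fin d)) → EuclideanSpace ℝ (Fin d)), Measurable G →
      ∫ ω, G (fun i => Z (i + m) ω) ∂μ = ∫ ω, G (fun i => Z i ω) ∂μ := by
    intro m G hG
    have hshift : Measurable (fun ω => (fun i : ℕ => Z (i + m) ω)) :=
      measurable_pi_lambda _ (fun i => hmeas (i + m))
    have hGsm1 := hG.stronglyMeasurable.aestronglyMeasurable
      (μ := Measure.map (fun ω => (fun i : ℕ => Z (i + m) ω)) μ)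
    have hGsm2 := hG.stronglyMeasurable.aestronglyMeasurable
      (μ := Measure.map (fun ω => (fun i : ℕ => Z i ω)) μ)
    rw [← integral_map hshift.aemeasurable hGsm1, ← integral_map hseq.aemeasurable hGsm2,
      hstat m]
  set c₁ : EuclideanSpace ℝ (Fin d) := ∫ ω, φ (Z 1 ω) ∂μ with hc₁def
  have hc : ∀ j : ℕ, 1 ≤ j → ∫ ω, φ (Z j ω) ∂μ = c₁ := by
    intro j hj
    have h := htransE (j - 1) (fun z => φ (z 1)) (hφmeas.comp (measurable_pi_apply 1))
    simp only [] at h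
    rw [show 1 + (j - 1) = j by omega] at h
    exact h
  set X : ℕ → Ω → EuclideanSpace ℝ (Fin d) := fun j ω => φ (Z j ω) - c₁ with hXdef
  have hXmeas : ∀ j, Measurable (X j) := fun j => (hφmeas.comp (hmeas j)).sub measurable_const
  have hXbdd : ∀ j ω, ‖X j ω‖ ≤ a + ‖c₁‖ := by
    intro j ω
    calc ‖φ (Z j ω) - c₁‖ ≤ ‖φ (Z j ω)‖ + ‖c₁‖ := norm_sub_le _ _
      _ ≤ a + ‖c₁‖ := by linarith [hφbdd (Z j ω)]
  have hXmem : ∀ j, MemLp (X j) 2 μ := fun j =>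
    MemLp.of_bound (hXmeas j).aestronglyMeasurable (a + ‖c₁‖) (ae_of_all _ (hXbdd j))
  have hφint : ∀ j, Integrable (fun ω => φ (Z j ω)) μ := fun j =>
    Integrable.mono' (integrable_const a) (hφmeas.comp (hmeas j)).aestronglyMeasurable
      (ae_of_all _ fun ω => hφbdd (Z j ω))
  have hXint : ∀ j, Integrable (X j) μ := fun j => (hφint j).sub (integrable_const c₁)
  have hX0 : ∀ j : ℕ, 1 ≤ j → ∫ ω, X j ω ∂μ = 0 := by
    intro j hj
    rw [hXdef]
    simp only []
    rw [integral_sub (hφint j) (integrable_const c₁), hc j hj, integral_const]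
    simp
  have hX0i : ∀ (j : ℕ) (i : Fin d), 1 ≤ j → ∫ ω, X j ω i ∂μ = 0 := by
    intro j i hj
    have h := (EuclideanSpace.proj (𝕜 := ℝ) i).integral_comp_comm (hXint j)
    have h2 : (fun ω => X j ω i) = fun ω => (EuclideanSpace.proj (𝕜 := ℝ) i) (X j ω) := rfl
    rw [h2, h, hX0 j hj, map_zero]
  have hXiint : ∀ (j : ℕ) (i : Fin d), Integrable (fun ω => X j ω i) μ := by
    intro j i
    have := (EuclideanSpace.proj (𝕜 := ℝ) i).integrable_comp (hXint j)
    simpa using this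
  set Y : ℕ → Lp (EuclideanSpace ℝ (Fin d)) 2 μ := fun j => (hXmem j).toLp (X j) with hYdef
  have hYcoe : ∀ F : Finset ℕ, (⇑(∑ j ∈ F, Y j) : Ω → EuclideanSpace ℝ (Fin d)) =ᵐ[μ] fun ω => ∑ j ∈ F, X j ω := by
    intro F
    induction F using Finset.induction_on with
    | empty => simpa [Pi.zero_def] using (Lp.coeFn_zero (EuclideanSpace ℝ (Fin d)) 2 μ : _)
    | @insert j₀ s hj ih =>
        rw [Finset.sum_insert hj]
        filter_upwards [Lp.coeFn_add (Y j₀) (∑ j ∈ s, Y j), (hXmem j₀).coeFn_toLp, ih]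
          with ω h1 h2 h3
        rw [h1, Pi.add_apply, h2, h3, Finset.sum_insert hj]
  have hYnorm : ∀ F : Finset ℕ,
      ‖∑ j ∈ F, Y j‖ = Real.sqrt (∫ ω, ‖∑ j ∈ F, X j ω‖ ^ 2 ∂μ) := by
    intro F
    have h1 : (inner ℝ (∑ j ∈ F, Y j) (∑ j ∈ F, Y j) : ℝ) = ∫ ω, ‖∑ j ∈ F, X j ω‖ ^ 2 ∂μ := by
      rw [MeasureTheory.L2.inner_def]
      refine integral_congr_ae ?_
      filter_upwards [hYcoe F] with ω h
      rw [h, real_inner_self_eq_norm_sq]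
    rw [← Real.sqrt_sq (norm_nonneg _), ← real_inner_self_eq_norm_sq, h1]
  have hinner : ∀ F G : Finset ℕ,
      (inner ℝ (∑ j ∈ F, Y j) (∑ j ∈ G, Y j) : ℝ)
        = ∫ ω, (inner ℝ (∑ j ∈ F, X j ω) (∑ j ∈ G, X j ω) : ℝ) ∂μ := by
    intro F G
    rw [MeasureTheory.L2.inner_def]
    refine integral_congr_ae ?_
    filter_upwards [hYcoe F, hYcoe G] with ω h1 h2
    rw [h1, h2]
  set σ : ℝ := ‖Y 1‖ with hσdef
  have hσ : ∀ j : ℕ, 1 ≤ j → ‖Y j‖ = σ := by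
    intro j hj
    have hs : ∀ j' : ℕ, ‖Y j'‖ = Real.sqrt (∫ ω, ‖X j' ω‖ ^ 2 ∂μ) := by
      intro j'
      have := hYnorm {j'}
      simpa using this
    rw [hσdef, hs j, hs 1]
    congr 1
    have h := htransR (j - 1) (fun z => ‖φ (z 1) - c₁‖ ^ 2)
      ((((hφmeas.comp (measurable_pi_apply 1)).sub measurable_const).norm).pow_const 2)
    simp only [] at h
    rw [show 1 + (j - 1) = j by omega] at h
    exact h

  -- stationarity of block norms
  have hstatS : ∀ (s n' : ℕ),
      ‖∑ j ∈ Finset.Icc (s+2) (s+n'+1), Y j‖ = ‖∑ j ∈ Finset.Icc 2 (n'+1), Y j‖ := by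
    intro s n'
    rw [hYnorm, hYnorm]
    congr 1
    have hG : Measurable (fun z : ℕ → EuclideanSpace ℝ (Fin d) =>
        ‖∑ j ∈ Finset.Icc 2 (n'+1), (φ (z j) - c₁)‖ ^ 2) := by
      apply Measurable.pow_const
      apply Measurable.norm
      exact Finset.measurable_sum _
        (fun j _ => (hφmeas.comp (measurable_pi_apply j)).sub measurable_const)
    have h := htransR s _ hG
    have hre : ∀ ω, ∑ j ∈ Finset.Icc (s+2) (s+n'+1), X j ω
        = ∑ j ∈ Finset.Icc 2 (n'+1), X (j+s) ω := by
      intro ω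
      rw [show Finset.Icc (s+2) (s+n'+1) = Finset.Icc (2+s) (n'+1+s) by congr 1 <;> omega,
        ← Finset.map_add_right_Icc, Finset.sum_map]
      rfl
    calc ∫ ω, ‖∑ j ∈ Finset.Icc (s+2) (s+n'+1), X j ω‖ ^ 2 ∂μ
        = ∫ ω, ‖∑ j ∈ Finset.Icc 2 (n'+1), X (j+s) ω‖ ^ 2 ∂μ := by
          exact integral_congr_ae (ae_of_all _ fun ω => congrArg (fun v => ‖v‖ ^ 2) (hre ω))
      _ = ∫ ω, ‖∑ j ∈ Finset.Icc 2 (n'+1), X j ω‖ ^ 2 ∂μ := h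
  -- covariance bound
  have hcov : ∀ (k h m : ℕ), 1 ≤ k →
      (inner ℝ (∑ j ∈ Finset.Icc 2 (k+1), Y j) (∑ j ∈ Finset.Icc (k+h+2) (k+h+m+1), Y j) : ℝ)
        ≤ ρ (h+1) * (‖∑ j ∈ Finset.Icc 2 (k+1), Y j‖
            * ‖∑ j ∈ Finset.Icc (k+h+2) (k+h+m+1), Y j‖) := by
    intro k h m hk
    set F₁ := Finset.Icc 2 (k+1) with hF₁
    set F₂ := Finset.Icc (k+h+2) (k+h+m+1) with hF₂
    set A : Ω → EuclideanSpace ℝ (Fin d) := fun ω => ∑ j ∈ F₁, X j ω with hA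
    set B : Ω → EuclideanSpace ℝ (Fin d) := fun ω => ∑ j ∈ F₂, X j ω with hB
    have hAmeas : Measurable A := Finset.measurable_sum _ (fun j _ => hXmeas j)
    have hBmeas : Measurable B := Finset.measurable_sum _ (fun j _ => hXmeas j)
    set CA : ℝ := F₁.card * (a + ‖c₁‖) with hCA
    set CB : ℝ := F₂.card * (a + ‖c₁‖) with hCB
    have hac : (0:ℝ) ≤ a + ‖c₁‖ := by linarith [norm_nonneg c₁]
    have hCA0 : 0 ≤ CA := mul_nonneg (Nat.cast_nonneg _) hac
    have hCB0 : 0 ≤ CB := mul_nonneg (Nat.cast_nonneg _) hac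
    have hAbdd : ∀ ω, ‖A ω‖ ≤ CA := by
      intro ω
      calc ‖A ω‖ ≤ ∑ j ∈ F₁, ‖X j ω‖ := norm_sum_le _ _
        _ ≤ F₁.card • (a + ‖c₁‖) :=
          Finset.sum_le_card_nsmul _ _ _ (fun j _ => hXbdd j ω)
        _ = CA := by rw [nsmul_eq_mul, hCA]
    have hBbdd : ∀ ω, ‖B ω‖ ≤ CB := by
      intro ω
      calc ‖B ω‖ ≤ ∑ j ∈ F₂, ‖X j ω‖ := norm_sum_le _ _
        _ ≤ F₂.card • (a + ‖c₁‖) :=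
          Finset.sum_le_card_nsmul _ _ _ (fun j _ => hXbdd j ω)
        _ = CB := by rw [nsmul_eq_mul, hCB]
    have hAco : ∀ (i : Fin d) ω, |A ω i| ≤ CA :=
      fun i ω => le_trans (euclid_abs_coord _ i) (hAbdd ω)
    have hBco : ∀ (i : Fin d) ω, |B ω i| ≤ CB :=
      fun i ω => le_trans (euclid_abs_coord _ i) (hBbdd ω)
    have hAim : ∀ i : Fin d, Measurable (fun ω => A ω i) :=
      fun i => (measurable_pi_apply i).comp ((WithLp.measurable_ofLp _ _).comp hAmeas)
    have hBim : ∀ i : Fin d, Measurable (fun ω => B ω i) :=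
      fun i => (measurable_pi_apply i).comp ((WithLp.measurable_ofLp _ _).comp hBmeas)
    have hAsq : ∀ i : Fin d, Integrable (fun ω => (A ω i) ^ 2) μ := by
      intro i
      apply Integrable.mono' (integrable_const (CA ^ 2))
        (((hAim i).pow_const 2).aestronglyMeasurable)
      refine ae_of_all _ fun ω => ?_
      rw [Real.norm_eq_abs, abs_of_nonneg (sq_nonneg _), ← sq_abs]
      exact pow_le_pow_left₀ (abs_nonneg _) (hAco i ω) 2
    have hBsq : ∀ i : Fin d, Integrable (fun ω => (B ω i) ^ 2) μ := by
      intro i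
      apply Integrable.mono' (integrable_const (CB ^ 2))
        (((hBim i).pow_const 2).aestronglyMeasurable)
      refine ae_of_all _ fun ω => ?_
      rw [Real.norm_eq_abs, abs_of_nonneg (sq_nonneg _), ← sq_abs]
      exact pow_le_pow_left₀ (abs_nonneg _) (hBco i ω) 2
    have hAcoord : ∀ (i : Fin d) ω, A ω i = ∑ j ∈ F₁, X j ω i :=
      fun i ω => euclid_sum_apply _ _ _
    have hBcoord : ∀ (i : Fin d) ω, B ω i = ∑ j ∈ F₂, X j ω i :=
      fun i ω => euclid_sum_apply _ _ _
    have hAzero : ∀ i : Fin d, ∫ ω, A ω i ∂μ = 0 := by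
      intro i
      rw [show (fun ω => A ω i) = fun ω => ∑ j ∈ F₁, X j ω i from funext (hAcoord i)]
      rw [integral_finset_sum _ (fun j _ => hXiint j i)]
      apply Finset.sum_eq_zero
      intro j hj
      exact hX0i j i (by rw [hF₁] at hj; simp only [Finset.mem_Icc] at hj; omega)
    have hBzero : ∀ i : Fin d, ∫ ω, B ω i ∂μ = 0 := by
      intro i
      rw [show (fun ω => B ω i) = fun ω => ∑ j ∈ F₂, X j ω i from funext (hBcoord i)]
      rw [integral_finset_sum _ (fun j _ => hXiint j i)]
      apply Finset.sum_eq_zero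
      intro j hj
      exact hX0i j i (by rw [hF₂] at hj; simp only [Finset.mem_Icc] at hj; omega)
    have hco : ∀ i : Fin d, ∫ ω, A ω i * B ω i ∂μ
        ≤ ρ (h+1) * (Real.sqrt (∫ ω, (A ω i) ^ 2 ∂μ) * Real.sqrt (∫ ω, (B ω i) ^ 2 ∂μ)) := by
      intro i
      have mf : Measurable[⨆ l ∈ Set.Icc 1 (k+1),
          MeasurableSpace.comap (Z l) inferInstance] (fun ω => A ω i) := by
        rw [show (fun ω => A ω i) = fun ω => ∑ j ∈ F₁, X j ω i from funext (hAcoord i)]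
        apply Finset.measurable_sum
        intro j hj
        have hjmem : j ∈ Set.Icc 1 (k+1) := by
          rw [hF₁] at hj; simp only [Finset.mem_Icc] at hj; exact ⟨by omega, by omega⟩
        have hZ : Measurable[⨆ l ∈ Set.Icc 1 (k+1),
            MeasurableSpace.comap (Z l) inferInstance] (Z j) := by
          rw [measurable_iff_comap_le]
          exact le_biSup (f := fun l => MeasurableSpace.comap (Z l)
            (inferInstance : MeasurableSpace (EuclideanSpace ℝ (Fin d)))) hjmem
        have hXj : Measurable[⨆ l ∈ Set.Icc 1 (k+1),
            MeasurableSpace.comap (Z l) inferInstance] (X j) :=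
          (hφmeas.comp hZ).sub measurable_const
        exact (measurable_pi_apply i).comp ((WithLp.measurable_ofLp _ _).comp hXj)
      have mg : Measurable[⨆ l ∈ Set.Ici ((h+1) + (k+1)),
          MeasurableSpace.comap (Z l) inferInstance] (fun ω => B ω i) := by
        rw [show (fun ω => B ω i) = fun ω => ∑ j ∈ F₂, X j ω i from funext (hBcoord i)]
        apply Finset.measurable_sum
        intro j hj
        have hjmem : j ∈ Set.Ici ((h+1) + (k+1)) := by
          rw [hF₂] at hj; simp only [Finset.mem_Icc] at hj; simp only [Set.mem_Ici]; omega
        have hZ : Measurable[⨆ l ∈ Set.Ici ((h+1) + (k+1)),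
            MeasurableSpace.comap (Z l) inferInstance] (Z j) := by
          rw [measurable_iff_comap_le]
          exact le_biSup (f := fun l => MeasurableSpace.comap (Z l)
            (inferInstance : MeasurableSpace (EuclideanSpace ℝ (Fin d)))) hjmem
        have hXj : Measurable[⨆ l ∈ Set.Ici ((h+1) + (k+1)),
            MeasurableSpace.comap (Z l) inferInstance] (X j) :=
          (hφmeas.comp hZ).sub measurable_const
        exact (measurable_pi_apply i).comp ((WithLp.measurable_ofLp _ _).comp hXj)
      have hkey := hcorr (h+1) (k+1) (fun ω => A ω i) (fun ω => B ω i) mf mg (hAsq i) (hBsq i)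
      rw [hAzero i, hBzero i] at hkey
      simp only [mul_zero, sub_zero] at hkey
      calc ∫ ω, A ω i * B ω i ∂μ ≤ |∫ ω, A ω i * B ω i ∂μ| := le_abs_self _
        _ ≤ ρ (h+1) * Real.sqrt (∫ ω, (A ω i) ^ 2 ∂μ) * Real.sqrt (∫ ω, (B ω i) ^ 2 ∂μ) := hkey
        _ = ρ (h+1) * (Real.sqrt (∫ ω, (A ω i) ^ 2 ∂μ) * Real.sqrt (∫ ω, (B ω i) ^ 2 ∂μ)) := by
          ring
    have hprodint : ∀ i : Fin d, Integrable (fun ω => A ω i * B ω i) μ := by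
      intro i
      apply Integrable.mono' (integrable_const (CA * CB))
        (((hAim i).mul (hBim i)).aestronglyMeasurable)
      refine ae_of_all _ fun ω => ?_
      rw [Real.norm_eq_abs, Pi.mul_apply, abs_mul]
      exact mul_le_mul (hAco i ω) (hBco i ω) (abs_nonneg _) hCA0
    have hAnormsq : Real.sqrt (∑ i : Fin d, ∫ ω, (A ω i) ^ 2 ∂μ) = ‖∑ j ∈ F₁, Y j‖ := by
      rw [hYnorm]
      congr 1
      rw [← integral_finset_sum _ (fun i _ => hAsq i)]
      exact integral_congr_ae (ae_of_all _ fun ω => (euclid_norm_sq (A ω)).symm)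
    have hBnormsq : Real.sqrt (∑ i : Fin d, ∫ ω, (B ω i) ^ 2 ∂μ) = ‖∑ j ∈ F₂, Y j‖ := by
      rw [hYnorm]
      congr 1
      rw [← integral_finset_sum _ (fun i _ => hBsq i)]
      exact integral_congr_ae (ae_of_all _ fun ω => (euclid_norm_sq (B ω)).symm)
    calc (inner ℝ (∑ j ∈ F₁, Y j) (∑ j ∈ F₂, Y j) : ℝ)
        = ∫ ω, (inner ℝ (A ω) (B ω) : ℝ) ∂μ := hinner F₁ F₂
      _ = ∫ ω, ∑ i : Fin d, A ω i * B ω i ∂μ := by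
          apply integral_congr_ae
          refine ae_of_all _ fun ω => ?_
          simp [PiLp.inner_apply, mul_comm]
      _ = ∑ i : Fin d, ∫ ω, A ω i * B ω i ∂μ :=
          integral_finset_sum _ (fun i _ => hprodint i)
      _ ≤ ∑ i : Fin d, ρ (h+1) * (Real.sqrt (∫ ω, (A ω i) ^ 2 ∂μ)
            * Real.sqrt (∫ ω, (B ω i) ^ 2 ∂μ)) := Finset.sum_le_sum (fun i _ => hco i)
      _ = ρ (h+1) * ∑ i : Fin d, Real.sqrt (∫ ω, (A ω i) ^ 2 ∂μ)
            * Real.sqrt (∫ ω, (B ω i) ^ 2 ∂μ) := by rw [Finset.mul_sum]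
      _ ≤ ρ (h+1) * (Real.sqrt (∑ i : Fin d, ∫ ω, (A ω i) ^ 2 ∂μ)
            * Real.sqrt (∑ i : Fin d, ∫ ω, (B ω i) ^ 2 ∂μ)) := by
          apply mul_le_mul_of_nonneg_left _ (hρ0 (h+1))
          exact Real.sum_sqrt_mul_sqrt_le _ (fun i => integral_nonneg fun ω => sq_nonneg _)
            (fun i => integral_nonneg fun ω => sq_nonneg _)
      _ = ρ (h+1) * (‖∑ j ∈ F₁, Y j‖ * ‖∑ j ∈ F₂, Y j‖) := by
          rw [hAnormsq, hBnormsq]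

  have hσ0 : 0 ≤ σ := norm_nonneg _
  -- key induction on dyadic scales
  have key : ∀ r : ℕ, ∀ n' : ℕ, 1 ≤ n' → n' ≤ 2 ^ r →
      ‖∑ j ∈ Finset.Icc 2 (n'+1), Y j‖ ≤ σ * uAux ρ r := by
    intro r
    induction r with
    | zero =>
        intro n' h1 h2
        have hn'1 : n' = 1 := by simpa using Nat.le_antisymm h2 h1
        subst hn'1
        rw [show (1+1 : ℕ) = 2 from rfl, Finset.Icc_self, Finset.sum_singleton,
          hσ 2 (by omega)]
        simp [uAux]
    | succ r ih =>
        intro n' h1 h2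
        by_cases hle : n' ≤ 2 ^ r
        · exact le_trans (ih n' h1 hle) (mul_le_mul_of_nonneg_left (uAux_mono ρ hρ0 r) hσ0)
        · push_neg at hle
          have hpow2 : 2 ^ (r+1) = 2 ^ r + 2 ^ r := by rw [pow_succ]; ring
          set n₁ := 2 ^ r with hn₁
          set n₂ := n' - 2 ^ r with hn₂
          have hn₁1 : 1 ≤ n₁ := Nat.one_le_two_pow
          have hn₂1 : 1 ≤ n₂ := by omega
          have hn₂2 : n₂ ≤ 2 ^ r := by omega
          set h := 2 ^ (r / 4) with hhdef
          have hh1 : 1 ≤ h := Nat.one_le_two_pow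
          have hhr : h ≤ 2 ^ r := Nat.pow_le_pow_right (by omega) (by omega)
          have hβ1 : (1:ℝ) ≤ Real.sqrt (1 + ρ h) :=
            Real.one_le_sqrt.mpr (by linarith [hρ0 h])
          have hu1 : (1:ℝ) ≤ uAux ρ r := one_le_uAux ρ hρ0 r
          have huA : uAux ρ (r+1) = Real.sqrt 2 * Real.sqrt (1 + ρ h) * uAux ρ r + (h:ℝ) := by
            rw [hhdef]
            simp only [uAux]
            push_cast
            ring
          have hsplit1 : Finset.Icc 2 (n'+1)
              = Finset.Icc 2 (n₁+1) ∪ Finset.Icc (n₁+2) (n'+1) := by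
            ext x; simp only [Finset.mem_Icc, Finset.mem_union]; omega
          have hdisj1 : Disjoint (Finset.Icc 2 (n₁+1)) (Finset.Icc (n₁+2) (n'+1)) := by
            rw [Finset.disjoint_left]
            intro x hx hx'
            simp only [Finset.mem_Icc] at hx hx'
            omega
          have hterm1 : ‖∑ j ∈ Finset.Icc 2 (n₁+1), Y j‖ ≤ σ * uAux ρ r :=
            ih n₁ hn₁1 le_rfl
          have hYsumbound : ∀ (b e : ℕ), 1 ≤ b →
              ‖∑ j ∈ Finset.Icc b e, Y j‖ ≤ (Finset.Icc b e).card * σ := by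
            intro b e hb
            calc ‖∑ j ∈ Finset.Icc b e, Y j‖ ≤ ∑ j ∈ Finset.Icc b e, ‖Y j‖ :=
                norm_sum_le _ _
              _ = ∑ j ∈ Finset.Icc b e, σ := by
                  apply Finset.sum_congr rfl
                  intro j hj
                  simp only [Finset.mem_Icc] at hj
                  exact hσ j (by omega)
              _ = (Finset.Icc b e).card * σ := by
                  rw [Finset.sum_const, nsmul_eq_mul]
          by_cases hcase : n₂ ≤ h
          · -- short tail case
            calc ‖∑ j ∈ Finset.Icc 2 (n'+1), Y j‖
                = ‖(∑ j ∈ Finset.Icc 2 (n₁+1), Y j) + ∑ j ∈ Finset.Icc (n₁+2) (n'+1), Y j‖ := by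
                  rw [hsplit1, Finset.sum_union hdisj1]
              _ ≤ ‖∑ j ∈ Finset.Icc 2 (n₁+1), Y j‖ + ‖∑ j ∈ Finset.Icc (n₁+2) (n'+1), Y j‖ :=
                  norm_add_le _ _
              _ ≤ σ * uAux ρ r + (Finset.Icc (n₁+2) (n'+1)).card * σ := by
                  have := hYsumbound (n₁+2) (n'+1) (by omega)
                  linarith
              _ ≤ σ * uAux ρ r + (h : ℝ) * σ := by
                  have hcard : (Finset.Icc (n₁+2) (n'+1)).card = n₂ := by
                    rw [Nat.card_Icc]; omega
                  have : ((Finset.Icc (n₁+2) (n'+1)).card : ℝ) ≤ (h : ℝ) := by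
                    rw [hcard]; exact_mod_cast hcase
                  nlinarith
              _ ≤ σ * uAux ρ (r+1) := by
                  rw [huA]
                  have hfac : (1:ℝ) * 1 ≤ Real.sqrt 2 * Real.sqrt (1 + ρ h) :=
                    mul_le_mul one_le_sqrt2 hβ1 zero_le_one (by linarith [one_le_sqrt2])
                  have : σ * uAux ρ r ≤ σ * (Real.sqrt 2 * Real.sqrt (1 + ρ h) * uAux ρ r) := by
                    apply mul_le_mul_of_nonneg_left _ hσ0
                    nlinarith
                  nlinarith
          · -- main case with a gap
            push_neg at hcase
            have hsplit2 : Finset.Icc (n₁+2) (n'+1)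
                = Finset.Icc (n₁+2) (n₁+h+1) ∪ Finset.Icc (n₁+h+2) (n'+1) := by
              ext x; simp only [Finset.mem_Icc, Finset.mem_union]; omega
            have hdisj2 : Disjoint (Finset.Icc (n₁+2) (n₁+h+1)) (Finset.Icc (n₁+h+2) (n'+1)) := by
              rw [Finset.disjoint_left]
              intro x hx hx'
              simp only [Finset.mem_Icc] at hx hx'
              omega
            set T1 := ∑ j ∈ Finset.Icc 2 (n₁+1), Y j with hT1
            set T2 := ∑ j ∈ Finset.Icc (n₁+2) (n₁+h+1), Y j with hT2
            set T3 := ∑ j ∈ Finset.Icc (n₁+h+2) (n'+1), Y j with hT3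
            have hdecomp : ∑ j ∈ Finset.Icc 2 (n'+1), Y j = (T1 + T3) + T2 := by
              rw [hsplit1, Finset.sum_union hdisj1, hsplit2, Finset.sum_union hdisj2]
              abel
            -- bounds on pieces
            have hT2bound : ‖T2‖ ≤ (h : ℝ) * σ := by
              have := hYsumbound (n₁+2) (n₁+h+1) (by omega)
              have hcard : (Finset.Icc (n₁+2) (n₁+h+1)).card = h := by
                rw [Nat.card_Icc]; omega
              rw [hcard] at this
              exact this
            have hT1bound : ‖T1‖ ≤ σ * uAux ρ r := hterm1
            have hT3eq : ‖T3‖ = ‖∑ j ∈ Finset.Icc 2 ((n₂ - h)+1), Y j‖ := by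
              have hFeq : Finset.Icc (n₁+h+2) (n'+1)
                  = Finset.Icc ((n₁+h)+2) ((n₁+h)+(n₂-h)+1) := by
                congr 1
                omega
              rw [hT3, hFeq]
              exact hstatS (n₁+h) (n₂-h)
            have hT3bound : ‖T3‖ ≤ σ * uAux ρ r := by
              rw [hT3eq]
              exact ih (n₂ - h) (by omega) (by omega)
            -- covariance
            have hcovT : (inner ℝ T1 T3 : ℝ) ≤ ρ h * (‖T1‖ * ‖T3‖) := by
              have hFeq : Finset.Icc (n₁+h+2) (n'+1)
                  = Finset.Icc (n₁+h+2) (n₁+h+(n₂-h)+1) := by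
                congr 1
                omega
              have hc' := hcov n₁ h (n₂ - h) hn₁1
              rw [← hFeq] at hc'
              have hmono := hρmono h (h+1) (Nat.le_succ h)
              have hnn : (0:ℝ) ≤ ‖T1‖ * ‖T3‖ :=
                mul_nonneg (norm_nonneg _) (norm_nonneg _)
              calc (inner ℝ T1 T3 : ℝ) ≤ ρ (h+1) * (‖T1‖ * ‖T3‖) := hc'
                _ ≤ ρ h * (‖T1‖ * ‖T3‖) := mul_le_mul_of_nonneg_right hmono hnn
            -- gather
            set U := σ * uAux ρ r with hU
            have hU0 : 0 ≤ U := mul_nonneg hσ0 (by linarith)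
            have hsq : ‖T1 + T3‖ ^ 2 ≤ (1 + ρ h) * (2 * U ^ 2) := by
              have hexp := norm_add_sq_real T1 T3
              have h2xy : 2 * (‖T1‖ * ‖T3‖) ≤ ‖T1‖ ^ 2 + ‖T3‖ ^ 2 := by
                nlinarith [sq_nonneg (‖T1‖ - ‖T3‖)]
              have hT1sq : ‖T1‖ ^ 2 ≤ U ^ 2 := pow_le_pow_left₀ (norm_nonneg T1) hT1bound 2
              have hT3sq : ‖T3‖ ^ 2 ≤ U ^ 2 := pow_le_pow_left₀ (norm_nonneg T3) hT3bound 2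
              have hρh := hρ0 h
              have e1 : ρ h * (2 * (‖T1‖ * ‖T3‖)) ≤ ρ h * (‖T1‖ ^ 2 + ‖T3‖ ^ 2) :=
                mul_le_mul_of_nonneg_left h2xy hρh
              have e2 : (1 + ρ h) * (‖T1‖ ^ 2 + ‖T3‖ ^ 2) ≤ (1 + ρ h) * (2 * U ^ 2) :=
                mul_le_mul_of_nonneg_left (by linarith) (by linarith)
              have e3 : (1 + ρ h) * (‖T1‖ ^ 2 + ‖T3‖ ^ 2)
                  = ‖T1‖ ^ 2 + ‖T3‖ ^ 2 + ρ h * (‖T1‖ ^ 2 + ‖T3‖ ^ 2) := by ring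
              linarith [hexp, hcovT, e1, e2, e3]
            have hnormsum : ‖T1 + T3‖ ≤ Real.sqrt 2 * Real.sqrt (1 + ρ h) * U := by
              have h1ρ : (0:ℝ) ≤ 1 + ρ h := by linarith [hρ0 h]
              have hstep := Real.sqrt_le_sqrt hsq
              rw [Real.sqrt_sq (norm_nonneg (T1 + T3))] at hstep
              have heq : Real.sqrt ((1 + ρ h) * (2 * U ^ 2))
                  = Real.sqrt 2 * Real.sqrt (1 + ρ h) * U := by
                rw [Real.sqrt_mul h1ρ, Real.sqrt_mul (by norm_num : (0:ℝ) ≤ 2),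
                  Real.sqrt_sq hU0]
                ring
              rw [heq] at hstep
              exact hstep
            have hfinal : Real.sqrt 2 * Real.sqrt (1 + ρ h) * U + (h:ℝ) * σ
                = σ * uAux ρ (r+1) := by
              rw [huA, hU]; ring
            calc ‖∑ j ∈ Finset.Icc 2 (n'+1), Y j‖ = ‖(T1 + T3) + T2‖ := by rw [hdecomp]
              _ ≤ ‖T1 + T3‖ + ‖T2‖ := norm_add_le _ _
              _ ≤ Real.sqrt 2 * Real.sqrt (1 + ρ h) * U + (h:ℝ) * σ := by linarith
              _ = σ * uAux ρ (r+1) := hfinal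

  -- rewrite the statement in terms of X and Y
  have hindc : ∀ j : ℕ, 1 ≤ j → ∀ ω, Set.indicator {ω' | ‖Z j ω'‖ ≤ a} (Z j) ω
      - (∫ ω', Set.indicator {ω'' | ‖Z j ω''‖ ≤ a} (Z j) ω' ∂μ) = X j ω := by
    intro j hj ω
    have h1 : ∫ ω', Set.indicator {ω'' | ‖Z j ω''‖ ≤ a} (Z j) ω' ∂μ = c₁ := by
      simp only [hind]
      exact hc j hj
    rw [h1, congrFun (hind j) ω]
  have hLHS : (∫ ω, ‖∑ j ∈ Finset.Icc 2 (n + 1),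
      (Set.indicator {ω' | ‖Z j ω'‖ ≤ a} (Z j) ω
        - ∫ ω', Set.indicator {ω'' | ‖Z j ω''‖ ≤ a} (Z j) ω' ∂μ)‖ ^ 2 ∂μ)
      = ∫ ω, ‖∑ j ∈ Finset.Icc 2 (n+1), X j ω‖ ^ 2 ∂μ := by
    apply integral_congr_ae
    refine ae_of_all _ fun ω => ?_
    have hs : ∑ j ∈ Finset.Icc 2 (n + 1),
        (Set.indicator {ω' | ‖Z j ω'‖ ≤ a} (Z j) ω
          - ∫ ω', Set.indicator {ω'' | ‖Z j ω''‖ ≤ a} (Z j) ω' ∂μ)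
        = ∑ j ∈ Finset.Icc 2 (n+1), X j ω :=
      Finset.sum_congr rfl (fun j hj => hindc j
        (by simp only [Finset.mem_Icc] at hj; omega) ω)
    exact congrArg (fun v => ‖v‖ ^ 2) hs
  have hRHS : (∫ ω, ‖Set.indicator {ω' | ‖Z 1 ω'‖ ≤ a} (Z 1) ω
      - ∫ ω', Set.indicator {ω'' | ‖Z 1 ω''‖ ≤ a} (Z 1) ω' ∂μ‖ ^ 2 ∂μ)
      = ∫ ω, ‖X 1 ω‖ ^ 2 ∂μ :=
    integral_congr_ae (ae_of_all _ fun ω =>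
      congrArg (fun v => ‖v‖ ^ 2) (hindc 1 le_rfl ω))
  rw [hLHS, hRHS]
  have hgoalL : Real.sqrt (∫ ω, ‖∑ j ∈ Finset.Icc 2 (n+1), X j ω‖ ^ 2 ∂μ)
      = ‖∑ j ∈ Finset.Icc 2 (n+1), Y j‖ := (hYnorm _).symm
  have hgoalR : Real.sqrt (∫ ω, ‖X 1 ω‖ ^ 2 ∂μ) = σ := by
    have h1 := hYnorm {1}
    simp only [Finset.sum_singleton] at h1
    rw [hσdef, h1]
  rw [hgoalL, hgoalR]
  -- choose the dyadic scale
  set r := Nat.log 2 n + 1 with hr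
  have hn2r : n ≤ 2 ^ r := le_of_lt (Nat.lt_pow_succ_log_self (by norm_num) n)
  have hbound := key r n hn hn2r
  have huB := uAux_le ρ hρ0 hsum r
  have hsqrt2r : (Real.sqrt 2) ^ r = Real.sqrt ((2:ℝ) ^ r) := by
    have hsq : ((Real.sqrt 2) ^ r) ^ 2 = (2:ℝ) ^ r := by
      rw [← pow_mul, mul_comm, pow_mul, Real.sq_sqrt (by norm_num : (0:ℝ) ≤ 2)]
    rw [← hsq, Real.sqrt_sq (by positivity)]
  have h2r2n : ((2:ℝ) ^ r) ≤ 2 * (n:ℝ) := by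
    have h1 : (2:ℕ) ^ Nat.log 2 n ≤ n := Nat.pow_log_le_self 2 (by omega)
    have h2 : (2:ℕ) ^ r = 2 * 2 ^ Nat.log 2 n := by rw [hr, pow_succ]; ring
    have h3 : (2:ℕ) ^ r ≤ 2 * n := by omega
    exact_mod_cast h3
  have hfin : Real.sqrt ((2:ℝ) ^ r) ≤ Real.sqrt 2 * Real.sqrt n := by
    rw [← Real.sqrt_mul (by norm_num : (0:ℝ) ≤ 2) (n:ℝ)]
    exact Real.sqrt_le_sqrt h2r2n
  have hE0 : (0:ℝ) < Real.exp (4 * ∑' j : ℕ, ρ (2 ^ j)) := Real.exp_pos _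
  calc ‖∑ j ∈ Finset.Icc 2 (n+1), Y j‖ ≤ σ * uAux ρ r := hbound
    _ ≤ σ * (9 * Real.exp (4 * ∑' j : ℕ, ρ (2 ^ j)) * (Real.sqrt 2) ^ r) :=
        mul_le_mul_of_nonneg_left huB hσ0
    _ = σ * (9 * Real.exp (4 * ∑' j : ℕ, ρ (2 ^ j)) * Real.sqrt ((2:ℝ) ^ r)) := by
        rw [hsqrt2r]
    _ ≤ σ * (9 * Real.exp (4 * ∑' j : ℕ, ρ (2 ^ j)) * (Real.sqrt 2 * Real.sqrt n)) := by
        apply mul_le_mul_of_nonneg_left _ hσ0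
        apply mul_le_mul_of_nonneg_left hfin
        positivity
    _ = 9 * Real.exp (4 * ∑' j : ℕ, ρ (2 ^ j)) * Real.sqrt 2 * Real.sqrt n * σ := by
        ring
end

section
/- Let X be an ℝ^d-valued random vector, F a σ-algebra, and S an ℝ^d-valued random vector with ‖S‖₂ < ∞. Suppose that for all square-integrable real f measurable with respect to σ(X) and g measurable with respect to σ(S), |Corr(f,g)| ≤ ρ. Then ‖E(S | σ(X))‖₂ ≤ ρ‖S‖₂ whenever E S = 0, where ‖Y‖₂ = √(E⟨Y,Y⟩). -/
open MeasureTheory Set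

private lemma memLp_two_condExp_aux {α : Type*} {m : MeasurableSpace α} [m0 : MeasurableSpace α]
    (μ : Measure α) [IsFiniteMeasure μ] (hm : m ≤ m0) {f : α → ℝ} (hf : MemLp f 2 μ) :
    MemLp (μ[f|m]) 2 μ := by
  haveI : SigmaFinite (μ.trim hm) := inferInstance
  have hint : Integrable f μ := hf.integrable one_le_two
  have heq : ((condExpL2 ℝ ℝ hm (hf.toLp f) : α →₂[μ] ℝ) : α → ℝ) =ᵐ[μ] μ[f|m] := by
    refine ae_eq_condExp_of_forall_setIntegral_eq hm hint
      (fun s hs hμs => integrableOn_condExpL2_of_measure_ne_top hm hμs.ne _)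
      (fun s hs hμs => ?_) (aestronglyMeasurable_condExpL2 hm _)
    refine (integral_condExpL2_eq hm (hf.toLp f) hs hμs.ne).trans ?_
    exact setIntegral_congr_ae (hm s hs) ((hf.coeFn_toLp).mono fun x hx _ => hx)
  exact (Lp.memLp _).ae_eq heq

private lemma stmt14_aux {Ω : Type*} {m : MeasurableSpace Ω} [m0 : MeasurableSpace Ω]
    (μ : Measure Ω) [IsProbabilityMeasure μ] (hm : m ≤ m0)
    {d : ℕ} (S : Ω → EuclideanSpace ℝ (Fin d)) (hS : Measurable S)
    (hS2 : Integrable (fun ω => ‖S ω‖ ^ 2) μ)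
    (ρ : ℝ) (hρ : 0 ≤ ρ)
    (hcorr : ∀ f g : Ω → ℝ, Measurable[m] f →
      Measurable[MeasurableSpace.comap S inferInstance] g →
      Integrable (fun ω => (f ω) ^ 2) μ → Integrable (fun ω => (g ω) ^ 2) μ →
      |(∫ ω, f ω * g ω ∂μ) - (∫ ω, f ω ∂μ) * (∫ ω, g ω ∂μ)| ≤
        ρ * Real.sqrt (∫ ω, (f ω - ∫ ω', f ω' ∂μ) ^ 2 ∂μ)
          * Real.sqrt (∫ ω, (g ω - ∫ ω', g ω' ∂μ) ^ 2 ∂μ))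
    (hmean : ∫ ω, S ω ∂μ = 0) :
    Real.sqrt (∫ ω, ‖(μ[S|m]) ω‖ ^ 2 ∂μ) ≤ ρ * Real.sqrt (∫ ω, ‖S ω‖ ^ 2 ∂μ) := by
  haveI : SigmaFinite (μ.trim hm) := inferInstance
  have hSmem : MemLp S 2 μ := (memLp_two_iff_integrable_sq_norm hS.aestronglyMeasurable).mpr hS2
  have hSint : Integrable S μ := hSmem.integrable one_le_two
  have key : ∀ i : Fin d, (∫ ω, ((μ[S|m]) ω i) ^ 2 ∂μ) ≤ ρ ^ 2 * ∫ ω, (S ω i) ^ 2 ∂μ ∧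
      Integrable (fun ω => ((μ[S|m]) ω i) ^ 2) μ ∧ Integrable (fun ω => (S ω i) ^ 2) μ := by
    intro i
    set L : EuclideanSpace ℝ (Fin d) →L[ℝ] ℝ := EuclideanSpace.proj i with hL
    have hSi : MemLp (fun ω => S ω i) 2 μ := L.comp_memLp' hSmem
    have hSiInt : Integrable (fun ω => S ω i) μ := hSi.integrable one_le_two
    have hTmeas : StronglyMeasurable[m] (μ[S|m]) := stronglyMeasurable_condExp
    have hTi_sm : StronglyMeasurable[m] (fun ω => (μ[S|m]) ω i) :=
      L.continuous.comp_stronglyMeasurable hTmeas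
    have hTi_eq : (fun ω => (μ[S|m]) ω i) =ᵐ[μ] μ[(fun ω => S ω i)|m] := by
      refine ae_eq_condExp_of_forall_setIntegral_eq hm hSiInt
        (fun s hs hμs => (L.integrable_comp integrable_condExp).integrableOn)
        (fun s hs hμs => ?_) hTi_sm.aestronglyMeasurable
      have h1 : ∫ ω in s, (μ[S|m]) ω i ∂μ = L (∫ ω in s, (μ[S|m]) ω ∂μ) :=
        L.integral_comp_comm integrable_condExp.integrableOn
      have h2 : ∫ ω in s, S ω i ∂μ = L (∫ ω in s, S ω ∂μ) :=
        L.integral_comp_comm hSint.integrableOn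
      rw [h1, h2, setIntegral_condExp hm hSint hs]
    have hTi : MemLp (fun ω => (μ[S|m]) ω i) 2 μ :=
      (memLp_two_condExp_aux μ hm hSi).ae_eq hTi_eq.symm
    have hSi0 : ∫ ω, S ω i ∂μ = 0 := by
      have h := L.integral_comp_comm hSint
      rw [hmean] at h
      simpa [hL] using h
    have hTi0 : ∫ ω, (μ[S|m]) ω i ∂μ = 0 := by
      rw [integral_congr_ae hTi_eq, integral_condExp hm, hSi0]
    have hTiSq : Integrable (fun ω => ((μ[S|m]) ω i) ^ 2) μ :=
      (memLp_two_iff_integrable_sq hTi.aestronglyMeasurable).mp hTi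
    have hSiSq : Integrable (fun ω => (S ω i) ^ 2) μ :=
      (memLp_two_iff_integrable_sq hSi.aestronglyMeasurable).mp hSi
    have hmul_int : Integrable (fun ω => (μ[S|m]) ω i * S ω i) μ := by
      have h := (hSi.smul (r := 1) hTi :
        MemLp ((fun ω => (μ[S|m]) ω i) • (fun ω => S ω i)) 1 μ)
      simpa [Pi.smul_apply, smul_eq_mul, Pi.mul_def] using h.integrable le_rfl
    have hprod : ∫ ω, (μ[S|m]) ω i * S ω i ∂μ = ∫ ω, ((μ[S|m]) ω i) ^ 2 ∂μ := by
      have h3 : μ[(fun ω => (μ[S|m]) ω i * S ω i)|m]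
          =ᵐ[μ] (fun ω => (μ[S|m]) ω i) * μ[(fun ω => S ω i)|m] :=
        condExp_mul_of_stronglyMeasurable_left hTi_sm hmul_int hSiInt
      calc ∫ ω, (μ[S|m]) ω i * S ω i ∂μ
          = ∫ ω, (μ[(fun ω' => (μ[S|m]) ω' i * S ω' i)|m]) ω ∂μ := (integral_condExp hm).symm
        _ = ∫ ω, ((μ[S|m]) ω i * (μ[(fun ω' => S ω' i)|m]) ω) ∂μ := integral_congr_ae h3
        _ = ∫ ω, ((μ[S|m]) ω i) ^ 2 ∂μ := by
            refine integral_congr_ae (hTi_eq.mono fun ω hω => ?_)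
            simp only [← hω]
            ring
    have hSmeas' : Measurable[MeasurableSpace.comap S inferInstance] S := fun s hs => ⟨s, hs, rfl⟩
    have hg_meas : Measurable[MeasurableSpace.comap S inferInstance] (fun ω => S ω i) :=
      L.continuous.measurable.comp hSmeas'
    have hci := hcorr (fun ω => (μ[S|m]) ω i) (fun ω => S ω i)
      hTi_sm.measurable hg_meas hTiSq hSiSq
    rw [hTi0, hSi0] at hci
    simp only [sub_zero, mul_zero] at hci
    rw [hprod, abs_of_nonneg (integral_nonneg fun ω => sq_nonneg _)] at hci
    have ha : 0 ≤ ∫ ω, ((μ[S|m]) ω i) ^ 2 ∂μ := integral_nonneg fun ω => sq_nonneg _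
    have hb : 0 ≤ ∫ ω, (S ω i) ^ 2 ∂μ := integral_nonneg fun ω => sq_nonneg _
    refine ⟨?_, hTiSq, hSiSq⟩
    nlinarith [Real.sq_sqrt ha, Real.sq_sqrt hb, Real.sqrt_nonneg (∫ ω, ((μ[S|m]) ω i) ^ 2 ∂μ),
      Real.sqrt_nonneg (∫ ω, (S ω i) ^ 2 ∂μ),
      sq_nonneg (Real.sqrt (∫ ω, ((μ[S|m]) ω i) ^ 2 ∂μ)
        - ρ * Real.sqrt (∫ ω, (S ω i) ^ 2 ∂μ)), hci]
  have hnormT : ∫ ω, ‖(μ[S|m]) ω‖ ^ 2 ∂μ = ∑ i, ∫ ω, ((μ[S|m]) ω i) ^ 2 ∂μ := by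
    rw [← integral_finset_sum _ (fun i _ => (key i).2.1)]
    refine integral_congr_ae (Filter.Eventually.of_forall fun ω => ?_)
    show ‖(μ[S|m]) ω‖ ^ 2 = ∑ i, (μ[S|m]) ω i ^ 2
    rw [EuclideanSpace.norm_eq, Real.sq_sqrt (Finset.sum_nonneg fun i _ => sq_nonneg _)]
    simp [Real.norm_eq_abs, sq_abs]
  have hnormS : ∫ ω, ‖S ω‖ ^ 2 ∂μ = ∑ i, ∫ ω, (S ω i) ^ 2 ∂μ := by
    rw [← integral_finset_sum _ (fun i _ => (key i).2.2)]
    refine integral_congr_ae (Filter.Eventually.of_forall fun ω => ?_)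
    show ‖S ω‖ ^ 2 = ∑ i, S ω i ^ 2
    rw [EuclideanSpace.norm_eq, Real.sq_sqrt (Finset.sum_nonneg fun i _ => sq_nonneg _)]
    simp [Real.norm_eq_abs, sq_abs]
  have hsum : ∫ ω, ‖(μ[S|m]) ω‖ ^ 2 ∂μ ≤ ρ ^ 2 * ∫ ω, ‖S ω‖ ^ 2 ∂μ := by
    rw [hnormT, hnormS, Finset.mul_sum]
    exact Finset.sum_le_sum fun i _ => (key i).1
  calc Real.sqrt (∫ ω, ‖(μ[S|m]) ω‖ ^ 2 ∂μ)
      ≤ Real.sqrt (ρ ^ 2 * ∫ ω, ‖S ω‖ ^ 2 ∂μ) := Real.sqrt_le_sqrt hsum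
    _ = ρ * Real.sqrt (∫ ω, ‖S ω‖ ^ 2 ∂μ) := by
        rw [Real.sqrt_mul (sq_nonneg ρ), Real.sqrt_sq hρ]

/-- Maximal-correlation contraction of conditional expectation: if every pair of
square-integrable real functions measurable w.r.t. `σ(X)` and `σ(S)` respectively has
correlation at most `ρ`, and `E S = 0`, then `‖E(S|σ(X))‖₂ ≤ ρ‖S‖₂`. -/
theorem stmt_14 {Ω : Type*} [m0 : MeasurableSpace Ω] (μ : Measure Ω) [IsProbabilityMeasure μ]
    {d : ℕ} (X S : Ω → EuclideanSpace ℝ (Fin d))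
    (hX : Measurable X) (hS : Measurable S)
    (hS2 : Integrable (fun ω => ‖S ω‖ ^ 2) μ)
    (ρ : ℝ) (hρ : 0 ≤ ρ)
    (hcorr : ∀ f g : Ω → ℝ,
      Measurable[MeasurableSpace.comap X inferInstance] f →
      Measurable[MeasurableSpace.comap S inferInstance] g →
      Integrable (fun ω => (f ω) ^ 2) μ → Integrable (fun ω => (g ω) ^ 2) μ →
      |(∫ ω, f ω * g ω ∂μ) - (∫ ω, f ω ∂μ) * (∫ ω, g ω ∂μ)| ≤
        ρ * Real.sqrt (∫ ω, (f ω - ∫ ω', f ω' ∂μ) ^ 2 ∂μ)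
          * Real.sqrt (∫ ω, (g ω - ∫ ω', g ω' ∂μ) ^ 2 ∂μ))
    (hmean : ∫ ω, S ω ∂μ = 0) :
    Real.sqrt (∫ ω, ‖(μ[S | MeasurableSpace.comap X inferInstance]) ω‖ ^ 2 ∂μ) ≤
      ρ * Real.sqrt (∫ ω, ‖S ω‖ ^ 2 ∂μ) :=
  stmt14_aux μ hX.comap_le S hS hS2 ρ hρ hcorr hmean
end
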